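/- arXiv:1203.5498 — 4 statements merged into one kernel-verified Lean document; each statement's English description precedes it below -/
import Mathlib

section
/- Let $f$ be a trigonometric polynomial of degree $n$ (i.e. $f(x) = \sum_{k=-n}^{n} c_k e^{ikx}$) with $|f(x)| \le 1$ for all $x \in \mathbb{R}$. Then for all natural numbers $N, l$ and all $x \in \mathbb{R}$: if $l \le N$ then $\left|\left(\frac{d}{dx}\right)^l f(x)^N\right| \le (Nn)^l |f(x)|^{N-l}$, and in any case $\left|\left(\frac{d}{dx}\right)^l f(x)^N\right| \le (Nn)^l$. -/
open Complex Finset Real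

noncomputable section BernsteinAux

/-- nodes -/
def bt (m j : ℕ) : ℝ := (2 * j + 1) * π / (2 * m)

/-- weights -/
def ba (m j : ℕ) : ℝ := 1 / (4 * m * Real.sin (bt m j / 2) ^ 2)

def bT (m r : ℕ) : ℂ := ∑ j ∈ Finset.range (2 * m), (ba m j : ℂ) * Complex.exp (((r : ℝ) * bt m j : ℝ) * I)

lemma bt_pos {m j : ℕ} (hm : 0 < m) : 0 < bt m j := by
  apply div_pos (by positivity) (by positivity)

lemma bt_half_lt_pi {m j : ℕ} (hm : 0 < m) (hj : j < 2 * m) : bt m j / 2 < π := by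
  rw [bt, div_div]
  rw [div_lt_iff₀ (by positivity)]
  have h1 : (j:ℝ) + 1 ≤ 2 * m := by exact_mod_cast hj
  nlinarith [Real.pi_pos]

lemma sin_bt_pos {m j : ℕ} (hm : 0 < m) (hj : j < 2 * m) : 0 < Real.sin (bt m j / 2) := by
  apply Real.sin_pos_of_pos_of_lt_pi (by have := bt_pos (j := j) hm; linarith) (bt_half_lt_pi hm hj)

lemma ba_pos {m j : ℕ} (hm : 0 < m) (hj : j < 2 * m) : 0 < ba m j := by
  have := sin_bt_pos hm hj
  rw [ba]; positivity

/-- geometric sum vanishing -/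
lemma exp_sum_zero {m : ℕ} (hm : 0 < m) {r : ℕ} (hr0 : 0 < r) (hr : r < 2 * m) :
    ∑ j ∈ Finset.range (2 * m), Complex.exp (((r : ℝ) * bt m j : ℝ) * I) = 0 := by
  have hmr : (m : ℝ) ≠ 0 := by positivity
  have key : ∀ j, ((r : ℝ) * bt m j : ℝ) * I
      = ((r : ℝ) * (π / (2*m)) : ℝ) * I + j * (((r : ℝ) * (π / m) : ℝ) * I) := by
    intro j
    push_cast [bt]
    field_simp
    ring
  set q : ℂ := Complex.exp (((r : ℝ) * (π / m) : ℝ) * I) with hq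
  have hsum : ∑ j ∈ Finset.range (2 * m), Complex.exp (((r : ℝ) * bt m j : ℝ) * I)
      = Complex.exp (((r : ℝ) * (π / (2*m)) : ℝ) * I) * ∑ j ∈ Finset.range (2 * m), q ^ j := by
    rw [Finset.mul_sum]
    refine Finset.sum_congr rfl fun j _ => ?_
    rw [key j, Complex.exp_add, ← Complex.exp_nat_mul]
  rw [hsum]
  have hq1 : q ≠ 1 := by
    intro h
    rw [hq, Complex.exp_eq_one_iff] at h
    obtain ⟨k, hk⟩ := h
    have hI : ((r : ℂ) * (π / m)) = k * (2 * π) := by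
      have hI2 : ((r : ℝ) * (π / m) : ℝ) * I = (k * (2 * π)) * I := by rw [hk]; ring
      exact_mod_cast mul_right_cancel₀ Complex.I_ne_zero hI2
    have hreal : (r : ℝ) * (π / m) = k * (2 * π) := by exact_mod_cast hI
    have hrm : (r : ℝ) = k * (2 * m) := by
      have hpi := Real.pi_ne_zero
      field_simp at hreal
      linear_combination hreal
    have : (r : ℤ) = k * (2 * m) := by exact_mod_cast hrm
    rcases lt_trichotomy k 0 with hk0 | hk0 | hk0
    · have : (r : ℤ) < 0 := by nlinarith [this]
      omega
    · simp [hk0] at this; omega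
    · have : (2 * m : ℤ) ≤ r := by nlinarith [this]
      omega
  have hq2m : q ^ (2 * m) = 1 := by
    rw [hq, ← Complex.exp_nat_mul]
    have : ((2 * m : ℕ) : ℂ) * (((r : ℝ) * (π / m) : ℝ) * I) = (r : ℤ) * (2 * π * I) := by
      have hmc : (m : ℂ) ≠ 0 := by exact_mod_cast hmr
      push_cast
      field_simp
    rw [this, Complex.exp_int_mul_two_pi_mul_I]
  rw [geom_sum_eq hq1, hq2m]
  simp

end BernsteinAux

section BernsteinAux2

lemma cos_eq_one_sub {t : ℝ} : Real.cos t = 1 - 2 * Real.sin (t / 2) ^ 2 := by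
  have h : t = 2 * (t / 2) := by ring
  rw [h, Real.cos_two_mul', Real.cos_sq']
  ring

lemma second_diff {m : ℕ} (hm : 0 < m) {r : ℕ} (hr : r + 2 ≤ 2 * m) :
    bT m (r + 2) + bT m r - 2 * bT m (r + 1) = 0 := by
  have hterm : ∀ j ∈ Finset.range (2 * m),
      (ba m j : ℂ) * Complex.exp ((((r + 2 : ℕ) : ℝ) * bt m j : ℝ) * I)
      + (ba m j : ℂ) * Complex.exp (((r : ℝ) * bt m j : ℝ) * I)
      - 2 * ((ba m j : ℂ) * Complex.exp ((((r + 1 : ℕ) : ℝ) * bt m j : ℝ) * I))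
      = (-(1 / m : ℝ) : ℂ) * Complex.exp ((((r + 1 : ℕ) : ℝ) * bt m j : ℝ) * I) := by
    intro j hj
    have hj' := Finset.mem_range.mp hj
    set t := bt m j with ht
    have h1 : (((r + 2 : ℕ) : ℝ) * t : ℝ) * I = ((((r+1:ℕ) : ℝ) * t : ℝ) * I) + ((t : ℝ) * I) := by
      push_cast; ring
    have h2 : (((r : ℕ) : ℝ) * t : ℝ) * I = ((((r+1:ℕ) : ℝ) * t : ℝ) * I) + ((-t : ℝ) * I) := by
      push_cast; ring
    rw [h1, h2, Complex.exp_add, Complex.exp_add]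
    have hcos : Complex.exp ((t : ℝ) * I) + Complex.exp ((-t : ℝ) * I)
        = ((2 * Real.cos t : ℝ) : ℂ) := by
      rw [Complex.exp_mul_I, Complex.exp_mul_I]
      push_cast
      rw [Complex.cos_neg, Complex.sin_neg]
      ring
    have hreal : (ba m j) * (2 * Real.cos t - 2) = -(1 / m) := by
      have hs := sin_bt_pos hm hj'
      have hsne : Real.sin (t / 2) ≠ 0 := ne_of_gt hs
      rw [ba, cos_eq_one_sub]
      field_simp
      ring
    have hrealC : ((ba m j : ℝ) : ℂ) * ((2 * Real.cos t - 2 : ℝ) : ℂ) = (-(1 / m : ℝ) : ℂ) := by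
      rw [← Complex.ofReal_mul, hreal]; push_cast; ring
    calc (ba m j : ℂ) * (Complex.exp ((((r+1:ℕ):ℝ) * t : ℝ) * I) * Complex.exp ((t : ℝ) * I))
          + (ba m j : ℂ) * (Complex.exp ((((r+1:ℕ):ℝ) * t : ℝ) * I) * Complex.exp ((-t : ℝ) * I))
          - 2 * ((ba m j : ℂ) * Complex.exp ((((r + 1 : ℕ) : ℝ) * t : ℝ) * I))
        = (ba m j : ℂ) * (Complex.exp ((t : ℝ) * I) + Complex.exp ((-t : ℝ) * I) - 2)
            * Complex.exp ((((r+1:ℕ):ℝ) * t : ℝ) * I) := by ring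
      _ = (-(1 / m : ℝ) : ℂ) * Complex.exp ((((r + 1 : ℕ) : ℝ) * t : ℝ) * I) := by
          rw [hcos]
          rw [show ((2 * Real.cos t : ℝ) : ℂ) - 2 = ((2 * Real.cos t - 2 : ℝ) : ℂ) by push_cast; ring]
          rw [mul_assoc, ← hrealC]; ring
  have : bT m (r + 2) + bT m r - 2 * bT m (r + 1)
      = ∑ j ∈ Finset.range (2 * m), (-(1 / m : ℝ) : ℂ) * Complex.exp ((((r + 1 : ℕ) : ℝ) * bt m j : ℝ) * I) := by
    rw [bT, bT, bT, ← Finset.sum_add_distrib, Finset.mul_sum, ← Finset.sum_sub_distrib]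
    exact Finset.sum_congr rfl hterm
  rw [this, ← Finset.mul_sum, exp_sum_zero hm (by omega) (by omega), mul_zero]

end BernsteinAux2

section BernsteinAux3

lemma diff_const {m : ℕ} (hm : 0 < m) : ∀ r : ℕ, r + 1 ≤ 2 * m →
    bT m (r + 1) - bT m r = bT m 1 - bT m 0 := by
  intro r
  induction r with
  | zero => intro _; rfl
  | succ s ih =>
    intro hs
    have h2 := second_diff hm (r := s) (by omega)
    have := ih (by omega)
    have : bT m (s + 1 + 1) - bT m (s + 1) = bT m (s + 1) - bT m s := by
      have : bT m (s + 2) = 2 * bT m (s+1) - bT m s := by linear_combination h2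
      rw [show s + 1 + 1 = s + 2 from rfl, this]; ring
    rw [this, ih (by omega)]

lemma bT_affine {m : ℕ} (hm : 0 < m) : ∀ r : ℕ, r ≤ 2 * m →
    bT m r = bT m 0 + r * (bT m 1 - bT m 0) := by
  intro r
  induction r with
  | zero => intro _; simp
  | succ s ih =>
    intro hs
    have h1 := diff_const hm s (by omega)
    have h2 := ih (by omega)
    push_cast
    linear_combination h1 + h2

lemma bT_zero {m : ℕ} : bT m 0 = ((∑ j ∈ Finset.range (2 * m), ba m j : ℝ) : ℂ) := by
  rw [bT]
  push_cast
  try simp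

lemma bT_two_m {m : ℕ} (hm : 0 < m) : bT m (2 * m) = -bT m 0 := by
  rw [bT, bT]
  rw [← Finset.sum_neg_distrib]
  refine Finset.sum_congr rfl fun j _ => ?_
  have harg : (((2 * m : ℕ) : ℝ) * bt m j : ℝ) = ((2 * j + 1 : ℕ) : ℝ) * π := by
    rw [bt]
    have hmr : (m : ℝ) ≠ 0 := by positivity
    field_simp
    push_cast; ring
  rw [harg]
  have : Complex.exp (((( 2 * j + 1 : ℕ) : ℝ) * π : ℝ) * I) = -1 := by
    have : ((((2 * j + 1 : ℕ) : ℝ) * π : ℝ) : ℂ) * I = ((2 * j + 1 : ℕ) : ℂ) * ((π : ℂ) * I) := by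
      push_cast; ring
    rw [this, Complex.exp_nat_mul, Complex.exp_pi_mul_I]
    exact Odd.neg_one_pow ⟨j, by omega⟩
  rw [this]
  have h0 : ((0 : ℕ) : ℝ) * bt m j = 0 := by norm_num
  rw [h0]
  norm_num

lemma re_delta {m : ℕ} (hm : 0 < m) : (bT m 1 - bT m 0).re = -1 := by
  rw [bT, bT, ← Finset.sum_sub_distrib]
  have : ∀ j ∈ Finset.range (2 * m),
      ((ba m j : ℂ) * Complex.exp ((((1:ℕ):ℝ) * bt m j : ℝ) * I)
        - (ba m j : ℂ) * Complex.exp ((((0:ℕ):ℝ) * bt m j : ℝ) * I)).re = -(1 / (2 * m)) := by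
    intro j hj
    have hj' := Finset.mem_range.mp hj
    have h1 : (((1:ℕ):ℝ) * bt m j : ℝ) = bt m j := by norm_num
    have h0 : (((0:ℕ):ℝ) * bt m j : ℝ) = 0 := by norm_num
    rw [h1, h0]
    simp only [Complex.ofReal_zero, zero_mul, Complex.exp_zero, mul_one, Complex.sub_re,
      Complex.mul_re, Complex.ofReal_re, Complex.ofReal_im, zero_mul, sub_zero,
      Complex.exp_ofReal_mul_I_re]
    have hs := sin_bt_pos hm hj'
    have hsne : Real.sin (bt m j / 2) ≠ 0 := ne_of_gt hs
    rw [ba, cos_eq_one_sub]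
    field_simp
    ring
  rw [Complex.re_sum]
  rw [Finset.sum_congr rfl this]
  rw [Finset.sum_const, Finset.card_range]
  have hmr : (m : ℝ) ≠ 0 := by positivity
  field_simp
  rw [nsmul_eq_mul]; push_cast; field_simp

lemma sum_ba {m : ℕ} (hm : 0 < m) : ∑ j ∈ Finset.range (2 * m), ba m j = m := by
  have haff := bT_affine hm (2 * m) le_rfl
  have h2m := bT_two_m hm
  set A : ℝ := ∑ j ∈ Finset.range (2 * m), ba m j with hA
  have h0 : bT m 0 = (A : ℂ) := bT_zero
  have hdelta : ((2 * m : ℕ) : ℂ) * (bT m 1 - (A : ℂ)) = -2 * A := by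
    rw [h2m, h0] at haff
    linear_combination -haff
  have hre : (bT m 1 - (A:ℂ)).re = -1 := by rw [← h0]; exact re_delta hm
  have : ((2 * m : ℕ) : ℝ) * (bT m 1 - (A:ℂ)).re = -2 * A := by
    have := congrArg Complex.re hdelta
    simpa using this
  rw [hre] at this
  have : A = ((2*m : ℕ) : ℝ) / 2 := by push_cast at this ⊢; linarith
  rw [this]; push_cast; ring

lemma bT_eq {m : ℕ} (hm : 0 < m) {r : ℕ} (hr : r ≤ 2 * m) :
    bT m r = ((m : ℝ) - (r : ℝ) : ℝ) := by
  have haff := bT_affine hm r hr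
  have h0 : bT m 0 = ((m : ℕ) : ℂ) := by
    rw [bT_zero, sum_ba hm]; norm_cast
  have h2mne : ((2 * m : ℕ) : ℂ) ≠ 0 := by
    simp; omega
  have hdelta : bT m 1 - bT m 0 = -1 := by
    have haff2 := bT_affine hm (2 * m) le_rfl
    have h2m := bT_two_m hm
    rw [h2m, h0] at haff2
    have hD : ((2 * m : ℕ) : ℂ) * (bT m 1 - bT m 0) = ((2 * m : ℕ) : ℂ) * (-1) := by
      rw [h0]
      push_cast at haff2 ⊢
      linear_combination -haff2
    exact mul_left_cancel₀ h2mne hD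
  rw [haff, hdelta, h0]
  push_cast
  ring

end BernsteinAux3

section KeyIdentity

lemma exp_pi_div_two_I : Complex.exp (((π/2 : ℝ) : ℂ) * I) = I := by
  rw [Complex.exp_mul_I]
  rw [show ((π/2:ℝ):ℂ) = ((π:ℂ)/2) by push_cast; ring]
  rw [Complex.cos_pi_div_two, Complex.sin_pi_div_two]
  ring

lemma exp_m_bt {m : ℕ} (hm : 0 < m) {j : ℕ} :
    Complex.exp (((m : ℝ) * bt m j : ℝ) * I) = I * (-1) ^ j := by
  have hmr : (m : ℝ) ≠ 0 := by positivity
  have harg : ((m : ℝ) * bt m j : ℝ) = ((2 * j + 1 : ℕ) : ℝ) * (π / 2) := by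
    rw [bt]; field_simp; push_cast; ring
  rw [harg]
  have : ((((2*j+1 : ℕ) : ℝ) * (π/2) : ℝ) : ℂ) * I = ((2*j+1 : ℕ) : ℂ) * (((π/2 : ℝ) : ℂ) * I) := by
    push_cast; ring
  rw [this, Complex.exp_nat_mul, exp_pi_div_two_I]
  rw [pow_succ, pow_mul]
  simp [Complex.I_sq]
  ring

lemma key_identity {m : ℕ} (hm : 0 < m) {k : ℤ} (hk1 : -(m : ℤ) ≤ k) (hk2 : k ≤ (m : ℤ)) :
    ∑ j ∈ Finset.range (2 * m), (((-1) ^ j * ba m j : ℝ) : ℂ) * Complex.exp (I * k * (bt m j))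
      = I * k := by
  set r : ℕ := (k + m).toNat with hrdef
  have hr : (r : ℤ) = k + m := Int.toNat_of_nonneg (by omega)
  have hr2m : r ≤ 2 * m := by omega
  have hterm : ∀ j ∈ Finset.range (2 * m),
      (((-1) ^ j * ba m j : ℝ) : ℂ) * Complex.exp (I * k * (bt m j))
      = (-I) * ((ba m j : ℂ) * Complex.exp (((r : ℝ) * bt m j : ℝ) * I)) := by
    intro j hj
    have hj' := Finset.mem_range.mp hj
    have hsplit : (((r : ℝ) * bt m j : ℝ)) * I
        = (I * k * (bt m j)) + (((m : ℝ) * bt m j : ℝ) * I) := by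
      have : (r : ℝ) = (k : ℝ) + m := by exact_mod_cast congrArg (Int.cast : ℤ → ℝ) hr
      rw [this]; push_cast; ring
    rw [hsplit, Complex.exp_add, exp_m_bt hm]
    push_cast
    ring_nf
    rw [Complex.I_sq]
    ring
  rw [Finset.sum_congr rfl hterm, ← Finset.mul_sum]
  have : ∑ j ∈ Finset.range (2 * m), (ba m j : ℂ) * Complex.exp (((r : ℝ) * bt m j : ℝ) * I)
      = bT m r := rfl
  rw [this, bT_eq hm hr2m]
  have : ((m : ℝ) - (r : ℝ) : ℝ) = ((-k : ℤ) : ℝ) := by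
    have : (r : ℝ) = (k : ℝ) + m := by exact_mod_cast congrArg (Int.cast : ℤ → ℝ) hr
    rw [this]; push_cast; ring
  rw [this]
  push_cast
  ring

end KeyIdentity

section TPsec

noncomputable def E (k : ℤ) : ℝ → ℂ := fun x => Complex.exp (I * k * x)

noncomputable def TP (m : ℕ) : Submodule ℂ (ℝ → ℂ) :=
  Submodule.span ℂ (E '' Set.Icc (-(m : ℤ)) (m : ℤ))

lemma E_mem {m : ℕ} {k : ℤ} (h1 : -(m:ℤ) ≤ k) (h2 : k ≤ m) : E k ∈ TP m :=
  Submodule.subset_span ⟨k, Set.mem_Icc.mpr ⟨h1, h2⟩, rfl⟩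

lemma E_hasDerivAt (k : ℤ) (x : ℝ) : HasDerivAt (E k) (I * k * E k x) x := by
  have h1 : HasDerivAt (fun x : ℝ => (x : ℂ)) 1 x := Complex.ofRealCLM.hasDerivAt
  have h2 : HasDerivAt (fun x : ℝ => I * k * (x : ℂ)) (I * k) x := by
    simpa using h1.const_mul (I * (k : ℂ))
  have h3 := h2.cexp
  have hE : E k = fun x : ℝ => Complex.exp (I * (k:ℂ) * (x:ℂ)) := rfl
  rw [hE]
  convert h3 using 1
  show I * (k:ℂ) * E k x = _
  rw [hE]
  ring

lemma TP_mono {m m' : ℕ} (h : m ≤ m') : TP m ≤ TP m' := by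
  apply Submodule.span_mono
  apply Set.image_mono
  apply Set.Icc_subset_Icc <;> omega

lemma TP_mul {m m' : ℕ} {g h : ℝ → ℂ} (hg : g ∈ TP m) (hh : h ∈ TP m') :
    g * h ∈ TP (m + m') := by
  induction hg using Submodule.span_induction with
  | mem g1 hg1 =>
    obtain ⟨k, hk, rfl⟩ := hg1
    rw [Set.mem_Icc] at hk
    induction hh using Submodule.span_induction with
    | mem h1 hh1 =>
      obtain ⟨k', hk', rfl⟩ := hh1
      rw [Set.mem_Icc] at hk'
      have : E k * E k' = E (k + k') := by
        funext x
        show Complex.exp _ * Complex.exp _ = _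
        rw [← Complex.exp_add, E]
        push_cast
        ring_nf
      rw [this]
      exact E_mem (by push_cast; omega) (by push_cast; omega)
    | zero => rw [mul_zero]; exact zero_mem _
    | add h1 h2 _ _ ih1 ih2 => rw [mul_add]; exact add_mem ih1 ih2
    | smul c h1 _ ih => rw [mul_smul_comm]; exact Submodule.smul_mem _ _ ih
  | zero => rw [zero_mul]; exact zero_mem _
  | add g1 g2 _ _ ih1 ih2 => rw [add_mul]; exact add_mem ih1 ih2
  | smul c g1 _ ih => rw [smul_mul_assoc]; exact Submodule.smul_mem _ _ ih

lemma TP_one {m : ℕ} : (1 : ℝ → ℂ) ∈ TP m := by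
  have : (1 : ℝ → ℂ) = E 0 := by
    funext x; show (1 : ℂ) = Complex.exp _; simp [E]
  rw [this]
  exact E_mem (by omega) (by omega)

lemma TP_pow {n : ℕ} {f : ℝ → ℂ} (hf : f ∈ TP n) (N : ℕ) : f ^ N ∈ TP (N * n) := by
  induction N with
  | zero => simpa using TP_one
  | succ N ih =>
    have := TP_mul ih hf
    rw [pow_succ]
    rw [show (N + 1) * n = N * n + n by ring]
    exact this

lemma TP_deriv {m : ℕ} {g : ℝ → ℂ} (hg : g ∈ TP m) :
    ∃ g', (∀ x, HasDerivAt g (g' x) x) ∧ g' ∈ TP m := by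
  induction hg using Submodule.span_induction with
  | mem g1 hg1 =>
    obtain ⟨k, hk, rfl⟩ := hg1
    rw [Set.mem_Icc] at hk
    refine ⟨(I * k) • E k, fun x => ?_, Submodule.smul_mem _ _ (E_mem hk.1 hk.2)⟩
    simpa using E_hasDerivAt k x
  | zero => exact ⟨0, fun x => by simpa using hasDerivAt_const x (0:ℂ), zero_mem _⟩
  | add g1 g2 _ _ ih1 ih2 =>
    obtain ⟨g1', hd1, hm1⟩ := ih1
    obtain ⟨g2', hd2, hm2⟩ := ih2
    exact ⟨g1' + g2', fun x => (hd1 x).add (hd2 x), add_mem hm1 hm2⟩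
  | smul c g1 _ ih =>
    obtain ⟨g1', hd, hmem⟩ := ih
    refine ⟨c • g1', fun x => ?_, Submodule.smul_mem _ _ hmem⟩
    exact (hd x).const_smul c

lemma TP_interp {m : ℕ} (hm : 0 < m) {g : ℝ → ℂ} (hg : g ∈ TP m) (x : ℝ) :
    HasDerivAt g (∑ j ∈ Finset.range (2 * m),
      (((-1) ^ j * ba m j : ℝ) : ℂ) * g (x + bt m j)) x := by
  induction hg using Submodule.span_induction with
  | mem g1 hg1 =>
    obtain ⟨k, hk, rfl⟩ := hg1
    rw [Set.mem_Icc] at hk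
    have hsum : ∑ j ∈ Finset.range (2 * m), (((-1) ^ j * ba m j : ℝ) : ℂ) * E k (x + bt m j)
        = I * k * E k x := by
      have : ∀ j ∈ Finset.range (2 * m),
          (((-1) ^ j * ba m j : ℝ) : ℂ) * E k (x + bt m j)
          = ((((-1) ^ j * ba m j : ℝ) : ℂ) * Complex.exp (I * k * (bt m j))) * E k x := by
        intro j _
        simp only [E]
        push_cast
        rw [show I * (k:ℂ) * ((x:ℂ) + (bt m j : ℂ)) = I * k * ((bt m j : ℝ):ℂ) + I * k * (x:ℂ) by
          ring, Complex.exp_add]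
        ring
      rw [Finset.sum_congr rfl this, ← Finset.sum_mul, key_identity hm hk.1 hk.2]
    rw [hsum]
    exact E_hasDerivAt k x
  | zero => simpa using hasDerivAt_const x (0:ℂ)
  | add g1 g2 _ _ ih1 ih2 =>
    have := (ih1).add (ih2)
    refine this.congr_deriv ?_; symm
    rw [← Finset.sum_add_distrib]
    refine Finset.sum_congr rfl fun j _ => ?_
    show _ * (g1 _ + g2 _) = _
    ring
  | smul c g1 _ ih =>
    have := ih.const_mul c
    refine this.congr_deriv ?_; symm
    rw [Finset.mul_sum]
    refine Finset.sum_congr rfl fun j _ => ?_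
    show _ * (c * g1 _) = _
    ring

lemma TP_zero_const {g : ℝ → ℂ} (hg : g ∈ TP 0) : ∃ c : ℂ, g = fun _ => c := by
  have h0 : TP 0 = Submodule.span ℂ {E 0} := by
    rw [TP]
    congr 1
    have : Set.Icc (-((0:ℕ):ℤ)) ((0:ℕ):ℤ) = {0} := by norm_num
    rw [this, Set.image_singleton]
  rw [h0, Submodule.mem_span_singleton] at hg
  obtain ⟨c, rfl⟩ := hg
  refine ⟨c, ?_⟩
  funext x
  show c * Complex.exp _ = c
  simp [E]

lemma bernstein_bound {m : ℕ} {M : ℝ} {g g' : ℝ → ℂ} (hg : g ∈ TP m)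
    (hd : ∀ x, HasDerivAt g (g' x) x) (hM : ∀ x, ‖g x‖ ≤ M) :
    ∀ x, ‖g' x‖ ≤ m * M := by
  intro x
  rcases Nat.eq_zero_or_pos m with hm | hm
  · subst hm
    obtain ⟨c, rfl⟩ := TP_zero_const hg
    have : g' x = 0 := by
      have := (hd x).unique (hasDerivAt_const x c)
      exact this
    rw [this]
    simp
  · have hint := TP_interp hm hg x
    have heq : g' x = ∑ j ∈ Finset.range (2 * m),
        (((-1) ^ j * ba m j : ℝ) : ℂ) * g (x + bt m j) := (hd x).unique hint
    rw [heq]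
    calc ‖∑ j ∈ Finset.range (2 * m), (((-1) ^ j * ba m j : ℝ) : ℂ) * g (x + bt m j)‖
        ≤ ∑ j ∈ Finset.range (2 * m), ‖(((-1) ^ j * ba m j : ℝ) : ℂ) * g (x + bt m j)‖ := by
          apply norm_sum_le
      _ ≤ ∑ j ∈ Finset.range (2 * m), ba m j * M := by
          apply Finset.sum_le_sum
          intro j hj
          have hj' := Finset.mem_range.mp hj
          rw [norm_mul, Complex.norm_real, Real.norm_eq_abs, abs_mul, _root_.abs_pow, abs_neg, abs_one, one_pow,
            one_mul, abs_of_pos (ba_pos hm hj')]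
          exact mul_le_mul_of_nonneg_left (hM _) (le_of_lt (ba_pos hm hj'))
      _ = m * M := by rw [← Finset.sum_mul, sum_ba hm]

end TPsec

section MainSec

lemma hasDerivAt_pow_comp {f : ℝ → ℂ} {f' : ℂ} {x : ℝ} (k : ℕ) (hf : HasDerivAt f f' x) :
    HasDerivAt (fun y => f y ^ k) ((k : ℂ) * f x ^ (k - 1) * f') x := by
  induction k with
  | zero => simpa using hasDerivAt_const x (1 : ℂ)
  | succ k ih =>
    have h := ih.mul hf
    have : HasDerivAt (fun y => f y ^ k * f y)
        ((k : ℂ) * f x ^ (k - 1) * f' * f x + f x ^ k * f') x := h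
    have heq : (fun y => f y ^ k * f y) = fun y => f y ^ (k + 1) := by
      funext y; rw [pow_succ]
    rw [heq] at this
    convert this using 1
    rcases Nat.eq_zero_or_pos k with hk | hk
    · subst hk; simp
    · have : k - 1 + 1 = k := by omega
      rw [show (k : ℂ) * f x ^ (k - 1) * f' * f x + f x ^ k * f'
          = ((k : ℂ) * (f x ^ (k - 1) * f x) + f x ^ k) * f' by ring,
        show f x ^ (k - 1) * f x = f x ^ (k - 1 + 1) by rw [pow_succ], this]
      push_cast
      ring

lemma iter_bound {m : ℕ} {M : ℝ} {h : ℝ → ℂ} (hh : h ∈ TP m) (hM : ∀ x, ‖h x‖ ≤ M) :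
    ∀ l : ℕ, iteratedDeriv l h ∈ TP m ∧
      ∀ x, ‖iteratedDeriv l h x‖ ≤ (m : ℝ) ^ l * M := by
  intro l
  induction l with
  | zero => exact ⟨by simpa [iteratedDeriv_zero] using hh, by simpa [iteratedDeriv_zero] using hM⟩
  | succ l ih =>
    obtain ⟨hTP, hb⟩ := ih
    obtain ⟨g', hd, hg'TP⟩ := TP_deriv hTP
    have hder : iteratedDeriv (l + 1) h = g' := by
      rw [iteratedDeriv_succ]
      funext x
      exact (hd x).deriv
    refine ⟨by rw [hder]; exact hg'TP, fun x => ?_⟩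
    rw [hder]
    calc ‖g' x‖ ≤ m * ((m : ℝ) ^ l * M) := bernstein_bound hTP hd hb x
      _ = (m : ℝ) ^ (l + 1) * M := by ring

lemma main_aux {n N : ℕ} {f : ℝ → ℂ} (hf : f ∈ TP n) (hb : ∀ x, ‖f x‖ ≤ 1) :
    ∀ l : ℕ, l ≤ N → ∃ g : ℝ → ℂ, g ∈ TP (l * n) ∧
      (∀ x, ‖g x‖ ≤ ((N * n : ℕ) : ℝ) ^ l) ∧
      iteratedDeriv l (f ^ N) = f ^ (N - l) * g := by
  intro l
  induction l with
  | zero =>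
    intro _
    refine ⟨1, by simpa using TP_one, fun x => ?_, ?_⟩
    · show ‖(1:ℂ)‖ ≤ _
      simp
    · rw [iteratedDeriv_zero]
      simp
  | succ l ih =>
    intro hlN
    obtain ⟨g, hgTP, hgb, hgeq⟩ := ih (by omega)
    obtain ⟨f', hf'd, hf'TP⟩ := TP_deriv hf
    have hf'b : ∀ x, ‖f' x‖ ≤ (n : ℝ) * 1 := bernstein_bound hf hf'd hb
    obtain ⟨g', hg'd, hg'TP⟩ := TP_deriv hgTP
    have hg'b : ∀ x, ‖g' x‖ ≤ ((l * n : ℕ) : ℝ) * (((N * n : ℕ) : ℝ) ^ l) :=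
      bernstein_bound hgTP hg'd hgb
    set G : ℝ → ℂ := (((N - l : ℕ) : ℂ) • (f' * g)) + f * g' with hG
    have hGTP : G ∈ TP ((l + 1) * n) := by
      have h1 : f' * g ∈ TP (n + l * n) := TP_mul hf'TP hgTP
      have h2 : f * g' ∈ TP (n + l * n) := TP_mul hf hg'TP
      have : G ∈ TP (n + l * n) := add_mem (Submodule.smul_mem _ _ h1) h2
      rwa [show (l + 1) * n = n + l * n by ring]
    have hpow : ∀ x : ℝ, HasDerivAt (fun y => f y ^ (N - l) * g y)
        (((N - l : ℕ) : ℂ) * f x ^ (N - l - 1) * f' x * g x + f x ^ (N - l) * g' x) x := by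
      intro x
      exact (hasDerivAt_pow_comp (N - l) (hf'd x)).mul (hg'd x)
    have hder : iteratedDeriv (l + 1) (f ^ N) = f ^ (N - (l + 1)) * G := by
      rw [iteratedDeriv_succ, hgeq]
      funext x
      have : deriv (f ^ (N - l) * g) x = deriv (fun y => f y ^ (N - l) * g y) x := rfl
      rw [this, (hpow x).deriv]
      show _ = f x ^ (N - (l + 1)) * (((N - l : ℕ) : ℂ) * (f' x * g x) + f x * g' x)
      have hsplit : f x ^ (N - l) = f x ^ (N - (l + 1)) * f x := by
        rw [← pow_succ]
        congr 1
        omega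
      rw [show N - l - 1 = N - (l + 1) by omega, hsplit]
      ring
    refine ⟨G, hGTP, fun x => ?_, hder⟩
    have habs : ‖G x‖ ≤
        ((N - l : ℕ) : ℝ) * ‖f' x‖ * ‖g x‖
          + ‖f x‖ * ‖g' x‖ := by
      show ‖((N - l : ℕ) : ℂ) * (f' x * g x) + f x * g' x‖ ≤ _
      calc ‖((N - l : ℕ) : ℂ) * (f' x * g x) + f x * g' x‖
          ≤ ‖((N - l : ℕ) : ℂ) * (f' x * g x)‖ + ‖f x * g' x‖ :=
            norm_add_le _ _
        _ = ((N - l : ℕ) : ℝ) * ‖f' x‖ * ‖g x‖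
              + ‖f x‖ * ‖g' x‖ := by
            rw [norm_mul, norm_mul, norm_mul]
            simp [Complex.norm_natCast]
            ring
    have hB : (0 : ℝ) ≤ ((N * n : ℕ) : ℝ) ^ l := by positivity
    have h1 : ((N - l : ℕ) : ℝ) * ‖f' x‖ * ‖g x‖
        ≤ ((N - l : ℕ) : ℝ) * ((n : ℝ) * 1) * (((N * n : ℕ) : ℝ) ^ l) := by
      apply mul_le_mul
      · exact mul_le_mul_of_nonneg_left (hf'b x) (by positivity)
      · exact hgb x
      · exact norm_nonneg _
      · positivity
    have h2 : ‖f x‖ * ‖g' x‖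
        ≤ 1 * (((l * n : ℕ) : ℝ) * (((N * n : ℕ) : ℝ) ^ l)) := by
      apply mul_le_mul (hb x) (hg'b x) (norm_nonneg _) zero_le_one
    have hcast : ((N - l : ℕ) : ℝ) * ((n : ℝ) * 1) * (((N * n : ℕ) : ℝ) ^ l)
        + 1 * (((l * n : ℕ) : ℝ) * (((N * n : ℕ) : ℝ) ^ l))
        = ((N * n : ℕ) : ℝ) ^ (l + 1) := by
      have : ((N - l : ℕ) : ℝ) = (N : ℝ) - l := by
        rw [Nat.cast_sub (by omega)]
      rw [this]
      push_cast
      ring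
    linarith [habs, h1, h2]

end MainSec

theorem stmt_11 (n : ℕ) (c : ℤ → ℂ) (f : ℝ → ℂ)
    (hf : ∀ x : ℝ, f x = ∑ k ∈ Finset.Icc (-(n : ℤ)) (n : ℤ),
      c k * Complex.exp (Complex.I * k * x))
    (hbound : ∀ x : ℝ, ‖f x‖ ≤ 1) :
    ∀ N l : ℕ, ∀ x : ℝ,
      (l ≤ N → ‖iteratedDeriv l (fun y => f y ^ N) x‖ ≤
          ((N * n : ℕ) : ℝ) ^ l * ‖f x‖ ^ (N - l)) ∧
        ‖iteratedDeriv l (fun y => f y ^ N) x‖ ≤ ((N * n : ℕ) : ℝ) ^ l := by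
  have hfTP : f ∈ TP n := by
    have hfeq : f = ∑ k ∈ Finset.Icc (-(n : ℤ)) (n : ℤ), c k • E k := by
      funext x
      rw [hf x, Finset.sum_apply]
      exact Finset.sum_congr rfl fun k _ => rfl
    rw [hfeq]
    apply Submodule.sum_mem
    intro k hk
    rw [Finset.mem_Icc] at hk
    exact Submodule.smul_mem _ _ (E_mem hk.1 hk.2)
  intro N l x
  have hlam : (fun y => f y ^ N) = f ^ N := rfl
  constructor
  · intro hlN
    obtain ⟨g, hgTP, hgb, hgeq⟩ := main_aux hfTP hbound l hlN
    rw [hlam, hgeq]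
    show ‖f x ^ (N - l) * g x‖ ≤ _
    rw [norm_mul, norm_pow]
    rw [mul_comm]
    apply mul_le_mul_of_nonneg_right (hgb x) (by positivity)
  · have hpowTP : f ^ N ∈ TP (N * n) := TP_pow hfTP N
    have hpowb : ∀ y, ‖(f ^ N) y‖ ≤ 1 := by
      intro y
      show ‖f y ^ N‖ ≤ 1
      rw [norm_pow]
      exact pow_le_one₀ (norm_nonneg _) (hbound y)
    have := (iter_bound hpowTP hpowb l).2 x
    rw [hlam]
    calc ‖iteratedDeriv l (f ^ N) x‖ ≤ ((N * n : ℕ) : ℝ) ^ l * 1 := this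
      _ = ((N * n : ℕ) : ℝ) ^ l := by ring
end

section
/- Let $X$ be a Banach space and $A$ a densely defined closed operator generating a strongly continuous semigroup $(T(t))_{t \ge 0}$. Suppose $\alpha \in \mathbb{R}$, $t > 0$, $\zeta = e^{it\alpha}$, and $\zeta - T(t)$ is invertible in $\mathcal{L}(X)$. Then $A - i\alpha$ is invertible with bounded inverse given by $(A - i\alpha)^{-1} = -e^{it\alpha}(\zeta - T(t))^{-1} \int_0^t e^{-is\alpha} T(s)\,ds$, where the integral is taken in the strong sense. In particular, if $\|(\zeta - T(t))^{-1}\| \le K$ and $\|T(s)\| \le M$ for $s \in [0,t]$, then $\|(A - i\alpha)^{-1}\| \le KMt$. -/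
open Filter Set MeasureTheory

section Helpers

variable {X : Type*} [NormedAddCommGroup X] [NormedSpace ℂ X]

/-- Conjugating a difference quotient by a differentiable scalar factor. -/
lemma conj_tendsto (d : ℝ → ℂ) (d' : ℂ) (hd : HasDerivAt d d' 0) (hd0 : d 0 = 1)
    (f : ℝ → X) (v L : X)
    (h : Tendsto (fun h : ℝ => h⁻¹ • (f h - v)) (nhdsWithin 0 (Ioi 0)) (nhds L)) :
    Tendsto (fun h : ℝ => h⁻¹ • (d h • f h - v)) (nhdsWithin 0 (Ioi 0))
      (nhds (L + d' • v)) := by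
  have hslope : Tendsto (fun h : ℝ => (h⁻¹ • (d h - 1)) • v) (nhdsWithin 0 (Ioi 0))
      (nhds (d' • v)) := by
    have h1 := hd.tendsto_slope_zero_right
    simp only [zero_add, hd0] at h1
    exact h1.smul_const v
  have hd1 : Tendsto d (nhdsWithin 0 (Ioi 0)) (nhds 1) := by
    have := hd.continuousAt.tendsto
    rw [hd0] at this
    exact this.mono_left nhdsWithin_le_nhds
  have key : ∀ h : ℝ, h⁻¹ • (d h • f h - v)
      = d h • (h⁻¹ • (f h - v)) + (h⁻¹ • (d h - 1)) • v := by
    intro h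
    have e1 : d h • f h - v = d h • (f h - v) + (d h - 1) • v := by
      rw [smul_sub, sub_smul, one_smul]; abel
    rw [e1, smul_add, smul_comm (h⁻¹) (d h), smul_assoc]
  simp only [key]
  simpa using (hd1.smul h).add hslope

/-- One-sided averages of a continuous function converge to the value. -/
lemma tendsto_avg [CompleteSpace X] {f : ℝ → X} {a : ℝ} (ha : 0 ≤ a)
    (hf : ContinuousOn f (Ici 0)) :
    Tendsto (fun h : ℝ => h⁻¹ • ∫ s in a..(a + h), f s) (nhdsWithin 0 (Ioi 0)) (nhds (f a)) := by
  rw [Metric.tendsto_nhdsWithin_nhds]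
  intro ε hε
  obtain ⟨δ, hδpos, hδ⟩ := Metric.continuousWithinAt_iff.1 (hf a ha) (ε / 2) (by linarith)
  refine ⟨δ, hδpos, fun {h} hh hhd => ?_⟩
  have hh0 : (0 : ℝ) < h := hh
  have hsub : Icc a (a + h) ⊆ Ici 0 := fun s hs => le_trans ha hs.1
  have hintf : IntervalIntegrable f volume a (a + h) := by
    apply ContinuousOn.intervalIntegrable
    rw [uIcc_of_le (by linarith)]
    exact hf.mono hsub
  have hintc : IntervalIntegrable (fun _ : ℝ => f a) volume a (a + h) :=
    intervalIntegrable_const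
  have key : (h : ℝ)⁻¹ • (∫ s in a..(a + h), f s) - f a
      = h⁻¹ • ∫ s in a..(a + h), (f s - f a) := by
    rw [intervalIntegral.integral_sub hintf hintc, intervalIntegral.integral_const,
      smul_sub, add_sub_cancel_left, smul_smul, inv_mul_cancel₀ (ne_of_gt hh0), one_smul]
  have hbound : ‖∫ s in a..(a + h), (f s - f a)‖ ≤ (ε / 2) * |a + h - a| := by
    apply intervalIntegral.norm_integral_le_of_norm_le_const
    intro s hs
    rw [uIoc_of_le (by linarith)] at hs
    have hs0 : s ∈ Ici (0 : ℝ) := le_trans ha hs.1.le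
    have hsd : dist s a < δ := by
      rw [Real.dist_eq, abs_of_nonneg (by linarith [hs.1.le])]
      have : |h| < δ := by simpa [Real.dist_eq] using hhd
      rw [abs_of_pos hh0] at this
      linarith [hs.2]
    have := hδ hs0 hsd
    rw [dist_eq_norm] at this
    exact this.le
  rw [dist_eq_norm, key, norm_smul, norm_inv, Real.norm_eq_abs, abs_of_pos hh0]
  have habs : |a + h - a| = h := by rw [add_sub_cancel_left, abs_of_pos hh0]
  rw [habs] at hbound
  calc h⁻¹ * ‖∫ s in a..(a + h), (f s - f a)‖ ≤ h⁻¹ * ((ε / 2) * h) := by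
        apply mul_le_mul_of_nonneg_left hbound (by positivity)
    _ = ε / 2 := by field_simp
    _ < ε := by linarith

end Helpers

/-- `A` (with domain `D`) is the infinitesimal generator of the semigroup `T`. -/
def IsGenerator {X : Type*} [NormedAddCommGroup X] [NormedSpace ℂ X]
    (T : ℝ → X →L[ℂ] X) (D : Set X) (A : X → X) : Prop :=
  (∀ x : X, x ∈ D ↔ ∃ y : X,
      Tendsto (fun t : ℝ => t⁻¹ • (T t x - x)) (nhdsWithin 0 (Ioi 0)) (nhds y)) ∧
  ∀ x ∈ D, Tendsto (fun t : ℝ => t⁻¹ • (T t x - x)) (nhdsWithin 0 (Ioi 0)) (nhds (A x))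

set_option maxHeartbeats 1000000 in
theorem stmt_15 {X : Type*} [NormedAddCommGroup X] [NormedSpace ℂ X] [CompleteSpace X]
    (T : ℝ → X →L[ℂ] X) (hT0 : T 0 = 1)
    (hTadd : ∀ t s : ℝ, 0 ≤ t → 0 ≤ s → T (t + s) = T t * T s)
    (hTcont : ∀ x : X, ContinuousOn (fun t : ℝ => T t x) (Ici 0))
    (D : Set X) (A : X → X) (hgen : IsGenerator T D A)
    (hdense : Dense D)
    (hclosed : IsClosed {p : X × X | p.1 ∈ D ∧ p.2 = A p.1})
    (α t : ℝ) (ht : 0 < t) (ζ : ℂ) (hζ : ζ = Complex.exp (Complex.I * t * α))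
    (Q : X →L[ℂ] X) (hQ1 : Q * (ζ • 1 - T t) = 1) (hQ2 : (ζ • 1 - T t) * Q = 1) :
    ∃ B : X →L[ℂ] X,
      (∀ x : X, B x = -(Complex.exp (Complex.I * t * α) •
          Q (∫ s in (0 : ℝ)..t, Complex.exp (-(Complex.I * s * α)) • T s x))) ∧
      (∀ x ∈ D, B (A x - (Complex.I * α) • x) = x) ∧
      (∀ x : X, B x ∈ D ∧ A (B x) - (Complex.I * α) • B x = x) ∧
      (∀ K M : ℝ, ‖Q‖ ≤ K → (∀ s ∈ Icc (0 : ℝ) t, ‖T s‖ ≤ M) → ‖B‖ ≤ K * M * t) := by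
  obtain ⟨hgen1, hgen2⟩ := hgen
  set c : ℝ → ℂ := fun s : ℝ => Complex.exp (-(Complex.I * s * α)) with hc
  set z : ℂ := Complex.exp (Complex.I * t * α) with hz
  have hζ' : ζ = z := hζ
  -- basic scalar facts
  have hczero : c 0 = 1 := by simp [hc]
  have hcmul : ∀ a b : ℝ, c (a + b) = c a * c b := by
    intro a b
    simp only [hc, ← Complex.exp_add]
    congr 1
    push_cast
    ring
  have hcnorm : ∀ s : ℝ, ‖c s‖ = 1 := by
    intro s
    simp only [hc]
    rw [Complex.norm_exp]
    norm_num [Complex.mul_re, Complex.mul_im, Complex.I_re, Complex.I_im]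
  have hznorm : ‖z‖ = 1 := by
    rw [hz, Complex.norm_exp]
    norm_num [Complex.mul_re, Complex.mul_im, Complex.I_re, Complex.I_im]
  have hdct : ∀ h : ℝ, Complex.exp (Complex.I * h * α) * c h = 1 := by
    intro h
    simp only [hc]
    rw [← Complex.exp_add, add_neg_cancel, Complex.exp_zero]
  have hzct : z * c t = 1 := by rw [hz]; exact hdct t
  -- derivatives
  have hore : HasDerivAt (fun s : ℝ => (s : ℂ)) 1 0 := by
    simpa using (hasDerivAt_id (((0 : ℝ) : ℂ))).comp_ofReal
  have h1 : HasDerivAt (fun s : ℝ => Complex.I * s * α) (Complex.I * α) 0 := by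
    have := (hore.const_mul Complex.I).mul_const (α : ℂ)
    simpa using this
  have hcderiv : HasDerivAt c (-(Complex.I * α)) 0 := by
    rw [hc]
    have h3 := HasDerivAt.comp (0 : ℝ)
      (Complex.hasDerivAt_exp (-(Complex.I * ((0 : ℝ) : ℂ) * α))) h1.neg
    simpa [Function.comp_def] using h3
  have hdderiv : HasDerivAt (fun h : ℝ => Complex.exp (Complex.I * h * α)) (Complex.I * α) 0 := by
    have h3 := HasDerivAt.comp (0 : ℝ)
      (Complex.hasDerivAt_exp (Complex.I * ((0 : ℝ) : ℂ) * α)) h1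
    simpa [Function.comp_def] using h3
  -- the twisted semigroup S
  set S : ℝ → X →L[ℂ] X := fun s => c s • T s with hS
  have hSapp : ∀ (s : ℝ) (x : X), S s x = c s • T s x := fun s x => rfl
  have hS0 : ∀ x : X, S 0 x = x := by
    intro x
    rw [hSapp, hczero, one_smul, hT0, ContinuousLinearMap.one_apply]
  have hSaddapp : ∀ a b : ℝ, 0 ≤ a → 0 ≤ b → ∀ x, S (a + b) x = S a (S b x) := by
    intro a b ha hb x
    calc S (a + b) x = (c a * c b) • ((T a * T b) x) := by
          rw [hSapp, hcmul, hTadd a b ha hb]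
      _ = c a • (c b • T a (T b x)) := by
          rw [ContinuousLinearMap.mul_apply, mul_smul]
      _ = c a • T a (c b • T b x) := by rw [_root_.map_smul]
      _ = S a (S b x) := by rw [hSapp, hSapp]
  have hScommapp : ∀ a b : ℝ, 0 ≤ a → 0 ≤ b → ∀ x, S a (S b x) = S b (S a x) := by
    intro a b ha hb x
    rw [← hSaddapp a b ha hb, ← hSaddapp b a hb ha, add_comm]
  have hccont : Continuous c := by
    rw [hc]
    exact (((continuous_const.mul Complex.continuous_ofReal).mul continuous_const).neg).cexp
  have hScont : ∀ x : X, ContinuousOn (fun s => S s x) (Ici 0) := by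
    intro x
    exact hccont.continuousOn.smul (hTcont x)
  have hIntAB : ∀ (x : X) (a b : ℝ), 0 ≤ a → 0 ≤ b →
      IntervalIntegrable (fun s => S s x) volume a b := by
    intro x a b ha hb
    apply ContinuousOn.intervalIntegrable
    apply (hScont x).mono
    intro s hs
    rcases le_total a b with hab | hab
    · rw [uIcc_of_le hab] at hs; exact le_trans ha hs.1
    · rw [uIcc_of_ge hab] at hs; exact le_trans hb hs.1
  -- uniform bound
  obtain ⟨M₀, hM₀⟩ : ∃ M₀ : ℝ, ∀ s ∈ Icc (0 : ℝ) t, ‖T s‖ ≤ M₀ := by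
    have hpt : ∀ x : X, ∃ C : ℝ, ∀ i : Icc (0 : ℝ) t, ‖T i.1 x‖ ≤ C := by
      intro x
      obtain ⟨C, hC⟩ := isCompact_Icc.exists_bound_of_continuousOn
        ((hTcont x).mono Icc_subset_Ici_self)
      exact ⟨C, fun i => hC i.1 i.2⟩
    obtain ⟨C', hC'⟩ := banach_steinhaus hpt
    exact ⟨C', fun s hs => hC' ⟨s, hs⟩⟩
  -- the strong integral V
  have hVb : ∀ M : ℝ, (∀ s ∈ Icc (0 : ℝ) t, ‖T s‖ ≤ M) → ∀ x : X,
      ‖∫ s in (0 : ℝ)..t, S s x‖ ≤ M * t * ‖x‖ := by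
    intro M hM x
    have h1' : ∀ s ∈ Set.uIoc (0 : ℝ) t, ‖S s x‖ ≤ M * ‖x‖ := by
      intro s hs
      rw [uIoc_of_le ht.le] at hs
      rw [hSapp, norm_smul, hcnorm, one_mul]
      calc ‖T s x‖ ≤ ‖T s‖ * ‖x‖ := (T s).le_opNorm x
        _ ≤ M * ‖x‖ :=
            mul_le_mul_of_nonneg_right (hM s ⟨hs.1.le, hs.2⟩) (norm_nonneg x)
    have h2 := intervalIntegral.norm_integral_le_of_norm_le_const h1'
    rw [sub_zero, abs_of_pos ht] at h2
    calc ‖∫ s in (0 : ℝ)..t, S s x‖ ≤ M * ‖x‖ * t := h2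
      _ = M * t * ‖x‖ := by ring
  let Vl : X →ₗ[ℂ] X :=
    { toFun := fun x => ∫ s in (0 : ℝ)..t, S s x
      map_add' := fun x y => by
        simp only [map_add]
        exact intervalIntegral.integral_add (hIntAB x 0 t le_rfl ht.le)
          (hIntAB y 0 t le_rfl ht.le)
      map_smul' := fun a x => by
        simp only [_root_.map_smul, RingHom.id_apply]
        exact intervalIntegral.integral_smul a _ }
  let V : X →L[ℂ] X := Vl.mkContinuous (M₀ * t) (fun x => hVb M₀ hM₀ x)
  have hVapp : ∀ x : X, V x = ∫ s in (0 : ℝ)..t, S s x := fun x => rfl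
  -- generator of S
  have hKgen : ∀ x ∈ D, Tendsto (fun h : ℝ => h⁻¹ • (S h x - x)) (nhdsWithin 0 (Ioi 0))
      (nhds (A x - (Complex.I * α) • x)) := by
    intro x hx
    have := conj_tendsto c (-(Complex.I * α)) hcderiv hczero (fun h => T h x) x (A x)
      (hgen2 x hx)
    simpa [hSapp, sub_eq_add_neg] using this
  have hKconv : ∀ v L : X,
      Tendsto (fun h : ℝ => h⁻¹ • (S h v - v)) (nhdsWithin 0 (Ioi 0)) (nhds L) →
      v ∈ D ∧ A v - (Complex.I * α) • v = L := by
    intro v L hL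
    have hconj := conj_tendsto (fun h : ℝ => Complex.exp (Complex.I * h * α)) (Complex.I * α)
      hdderiv (by simp) (fun h => S h v) v L hL
    have heq : ∀ h : ℝ, h⁻¹ • (Complex.exp (Complex.I * h * α) • S h v - v)
        = h⁻¹ • (T h v - v) := by
      intro h
      rw [hSapp, smul_smul, hdct h, one_smul]
    have hT' : Tendsto (fun h : ℝ => h⁻¹ • (T h v - v)) (nhdsWithin 0 (Ioi 0))
        (nhds (L + (Complex.I * α) • v)) := Tendsto.congr heq hconj
    have hvD : v ∈ D := (hgen1 v).2 ⟨_, hT'⟩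
    have hAv : A v = L + (Complex.I * α) • v := tendsto_nhds_unique (hgen2 v hvD) hT'
    exact ⟨hvD, by rw [hAv]; abel⟩
  -- key identity 1
  have hKI1 : ∀ x : X, Tendsto (fun h : ℝ => h⁻¹ • (S h (V x) - V x)) (nhdsWithin 0 (Ioi 0))
      (nhds (S t x - x)) := by
    intro x
    have hev : ∀ᶠ h in nhdsWithin 0 (Ioi 0), h⁻¹ • (S h (V x) - V x)
        = h⁻¹ • (∫ s in t..(t + h), S s x) - h⁻¹ • (∫ s in (0 : ℝ)..(0 + h), S s x) := by
      filter_upwards [self_mem_nhdsWithin] with h hh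
      have hh0 : (0 : ℝ) < h := hh
      have e1 : S h (V x) = ∫ s in (0 : ℝ)..t, S h (S s x) := by
        rw [hVapp]
        exact ((S h).intervalIntegral_comp_comm (hIntAB x 0 t le_rfl ht.le)).symm
      have e2 : (∫ s in (0 : ℝ)..t, S h (S s x)) = ∫ s in (0 : ℝ)..t, S (s + h) x := by
        apply intervalIntegral.integral_congr
        intro s hs
        rw [uIcc_of_le ht.le] at hs
        show S h (S s x) = S (s + h) x
        rw [← hSaddapp h s hh0.le hs.1, add_comm]
      have e3 : (∫ s in (0 : ℝ)..t, S (s + h) x) = ∫ s in (0 + h)..(t + h), S s x :=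
        intervalIntegral.integral_comp_add_right (fun s => S s x) h
      have I1 : (∫ s in (0 : ℝ)..(0 + h), S s x) + (∫ s in (0 + h)..(t + h), S s x)
          = ∫ s in (0 : ℝ)..(t + h), S s x :=
        intervalIntegral.integral_add_adjacent_intervals
          (hIntAB x 0 (0 + h) le_rfl (by linarith))
          (hIntAB x (0 + h) (t + h) (by linarith) (by linarith))
      have I2 : (∫ s in (0 : ℝ)..t, S s x) + (∫ s in t..(t + h), S s x)
          = ∫ s in (0 : ℝ)..(t + h), S s x :=
        intervalIntegral.integral_add_adjacent_intervals (hIntAB x 0 t le_rfl ht.le)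
          (hIntAB x t (t + h) ht.le (by linarith))
      rw [← smul_sub]
      congr 1
      rw [e1, e2, e3, hVapp]
      rw [sub_eq_sub_iff_add_eq_add]
      rw [add_comm] at I1
      rw [I1, ← I2]
      exact add_comm _ _
    have hlim := (tendsto_avg ht.le (hScont x)).sub (tendsto_avg le_rfl (hScont x))
    rw [hS0 x] at hlim
    exact Tendsto.congr' (hev.mono fun _ e => e.symm) hlim
  have hP1 : ∀ x : X, V x ∈ D ∧ A (V x) - (Complex.I * α) • V x = S t x - x :=
    fun x => hKconv (V x) (S t x - x) (hKI1 x)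
  -- S h commutes with V
  have hSV : ∀ h : ℝ, 0 ≤ h → ∀ x : X, S h (V x) = V (S h x) := by
    intro h hh x
    rw [hVapp, hVapp]
    rw [← (S h).intervalIntegral_comp_comm (hIntAB x 0 t le_rfl ht.le)]
    apply intervalIntegral.integral_congr
    intro s hs
    rw [uIcc_of_le ht.le] at hs
    exact hScommapp h s hh hs.1 x
  -- key identity 2
  have hP2 : ∀ x ∈ D, V (A x - (Complex.I * α) • x) = S t x - x := by
    intro x hx
    have hev : ∀ᶠ h in nhdsWithin 0 (Ioi 0),
        h⁻¹ • (S h (V x) - V x) = V (h⁻¹ • (S h x - x)) := by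
      filter_upwards [self_mem_nhdsWithin] with h hh
      rw [hSV h (le_of_lt hh) x, ← map_sub, ← V.map_smul_of_tower]
    have h1' : Tendsto (fun h : ℝ => V (h⁻¹ • (S h x - x))) (nhdsWithin 0 (Ioi 0))
        (nhds (V (A x - (Complex.I * α) • x))) :=
      (V.continuous.tendsto _).comp (hKgen x hx)
    exact tendsto_nhds_unique (Tendsto.congr' (hev.mono fun _ e => e.symm) h1') (hKI1 x)
  -- the resolvent R and algebra
  set R : X →L[ℂ] X := z • Q with hR
  have hzSt : z • S t = T t := by
    show z • (c t • T t) = T t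
    rw [smul_smul, hzct, one_smul]
  have hzsub : ζ • (1 : X →L[ℂ] X) - T t = z • (1 - S t) := by
    rw [smul_sub, hzSt, hζ']
  have hR1 : R * (1 - S t) = 1 := by
    have h' := hQ1
    rw [hzsub, mul_smul_comm] at h'
    rw [hR, smul_mul_assoc]
    exact h'
  have hR2 : (1 - S t) * R = 1 := by
    have h' := hQ2
    rw [hzsub, smul_mul_assoc] at h'
    rw [hR, mul_smul_comm]
    exact h'
  have hStV : S t * V = V * S t := by
    ext x
    simp only [ContinuousLinearMap.mul_apply]
    exact hSV t ht.le x
  have hWV : (1 - S t) * V = V * (1 - S t) := by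
    rw [sub_mul, mul_sub, one_mul, mul_one, hStV]
  have hVR : V * R = R * V := by
    calc V * R = (R * (1 - S t)) * (V * R) := by rw [hR1, one_mul]
      _ = R * (((1 - S t) * V) * R) := by simp only [mul_assoc]
      _ = R * ((V * (1 - S t)) * R) := by rw [hWV]
      _ = (R * V) * ((1 - S t) * R) := by simp only [mul_assoc]
      _ = R * V := by rw [hR2, mul_one]
  have hDneg : ∀ v ∈ D, -v ∈ D ∧ A (-v) = -A v := by
    intro v hv
    have h1' : Tendsto (fun h : ℝ => h⁻¹ • (T h (-v) - -v)) (nhdsWithin 0 (Ioi 0))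
        (nhds (-A v)) := by
      refine Tendsto.congr (fun h => ?_) (hgen2 v hv).neg
      rw [map_neg, neg_sub_neg, ← smul_neg, neg_sub]
    have hmem : -v ∈ D := (hgen1 (-v)).2 ⟨_, h1'⟩
    exact ⟨hmem, tendsto_nhds_unique (hgen2 (-v) hmem) h1'⟩
  -- assemble
  refine ⟨-(R * V), ?_, ?_, ?_, ?_⟩
  · intro x
    simp only [ContinuousLinearMap.neg_apply, ContinuousLinearMap.mul_apply, hR,
      ContinuousLinearMap.smul_apply, hVapp]
    rfl
  · intro x hx
    show -(R (V (A x - (Complex.I * α) • x))) = x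
    rw [hP2 x hx, ← map_neg, neg_sub]
    have h2 : x - S t x = (1 - S t) x := by
      simp [ContinuousLinearMap.sub_apply, ContinuousLinearMap.one_apply]
    rw [h2, ← ContinuousLinearMap.mul_apply, hR1, ContinuousLinearMap.one_apply]
  · intro x
    have hBx : (-(R * V)) x = -(V (R x)) := by
      rw [ContinuousLinearMap.neg_apply, ← hVR, ContinuousLinearMap.mul_apply]
    rw [hBx]
    obtain ⟨hmem, hval⟩ := hP1 (R x)
    obtain ⟨hmem2, hval2⟩ := hDneg (V (R x)) hmem
    refine ⟨hmem2, ?_⟩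
    rw [hval2]
    have h3 : -A (V (R x)) - (Complex.I * α) • (-(V (R x)))
        = -(A (V (R x)) - (Complex.I * α) • V (R x)) := by
      rw [smul_neg]; abel
    rw [h3, hval, neg_sub]
    have h2 : R x - S t (R x) = ((1 - S t) * R) x := by
      simp [ContinuousLinearMap.mul_apply, ContinuousLinearMap.sub_apply,
        ContinuousLinearMap.one_apply]
    rw [h2, hR2, ContinuousLinearMap.one_apply]
  · intro K M hK hM
    have hM0 : 0 ≤ M := le_trans (norm_nonneg (T 0)) (hM 0 ⟨le_rfl, ht.le⟩)
    have hK0 : 0 ≤ K := le_trans (norm_nonneg Q) hK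
    apply ContinuousLinearMap.opNorm_le_bound _ (by positivity)
    intro x
    rw [ContinuousLinearMap.neg_apply, norm_neg, ContinuousLinearMap.mul_apply, hR,
      ContinuousLinearMap.smul_apply, norm_smul, hznorm, one_mul]
    calc ‖Q (V x)‖ ≤ ‖Q‖ * ‖V x‖ := Q.le_opNorm _
      _ ≤ K * (M * t * ‖x‖) :=
          mul_le_mul hK (by rw [hVapp]; exact hVb M hM x) (norm_nonneg _) hK0
      _ = K * M * t * ‖x‖ := by ring
end

section
/- Let $(T(t))_{t \ge 0}$ be a strongly continuous semigroup on a Banach space $X$ with generator $A$. Assume there exist $\zeta \in \mathbb{C}$ with $|\zeta| = 1$, $t_0 > 0$ and $K > 0$ such that for all $0 < t \le t_0$ the operator $\zeta - T(t)$ is invertible with $\|(\zeta - T(t))^{-1}\| \le K$. Then there exist $\alpha_0 > 0$ and $C > 0$ such that $i\alpha \in \rho(A)$ and $\|\alpha (A - i\alpha)^{-1}\| \le C$ for all real $\alpha$ with $|\alpha| > \alpha_0$. -/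
open Filter Set MeasureTheory intervalIntegral

section aux
variable {X : Type*} [NormedAddCommGroup X] [NormedSpace ℂ X] [CompleteSpace X]

/-- The semigroup integral `∫₀^τ e^{-μ s} T s y ds` has right-difference-quotient limit
`μ • F - y + e^{-μτ} • T τ y`. -/
lemma key_tendsto (T : ℝ → X →L[ℂ] X) (hT0 : T 0 = 1)
    (hTadd : ∀ t s : ℝ, 0 ≤ t → 0 ≤ s → T (t + s) = T t * T s)
    (hTcont : ∀ x : X, ContinuousOn (fun t : ℝ => T t x) (Ici 0))
    (μ : ℂ) (τ : ℝ) (hτ : 0 < τ) (y : X) :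
    Tendsto (fun h : ℝ => h⁻¹ • (T h (∫ s in (0:ℝ)..τ, Complex.exp (-(μ*s)) • T s y)
        - ∫ s in (0:ℝ)..τ, Complex.exp (-(μ*s)) • T s y)) (nhdsWithin 0 (Ioi 0))
      (nhds (μ • (∫ s in (0:ℝ)..τ, Complex.exp (-(μ*s)) • T s y) - y
        + Complex.exp (-(μ*τ)) • T τ y)) := by
  set g : ℝ → X := fun s => Complex.exp (-(μ*s)) • T s y with hg
  have hgc : ContinuousOn g (Ici 0) := by
    apply ContinuousOn.smul _ (hTcont y)
    exact (Complex.continuous_exp.comp ((continuous_const.mul Complex.continuous_ofReal).neg)).continuousOn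
  have hgi : ∀ a b : ℝ, 0 ≤ a → 0 ≤ b → IntervalIntegrable g volume a b := by
    intro a b ha hb
    apply (hgc.mono ?_).intervalIntegrable
    intro x hx
    exact le_trans (le_min ha hb) hx.1
  set G : ℝ → X := fun b => ∫ s in (0:ℝ)..b, g s with hG
  -- the algebraic identity for h > 0
  have hid : ∀ h : ℝ, 0 < h →
      h⁻¹ • (T h (G τ) - G τ)
        = ((h:ℂ)⁻¹ * (Complex.exp (μ*h) - 1)) • G τ
          + Complex.exp (μ*h) • (h⁻¹ • (∫ s in τ..(τ+h), g s))
          - Complex.exp (μ*h) • (h⁻¹ • G h) := by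
    intro h hh
    have h1 : T h (G τ) = ∫ s in (0:ℝ)..τ, (T h) (g s) :=
      ((T h).intervalIntegral_comp_comm (hgi 0 τ le_rfl hτ.le)).symm
    have h2 : ∀ s ∈ uIcc (0:ℝ) τ, (T h) (g s) = Complex.exp (μ*h) • g (s+h) := by
      intro s hs
      have hs0 : 0 ≤ s := by
        rw [uIcc_of_le hτ.le] at hs; exact hs.1
      have hTs : T h (T s y) = T (s+h) y := by
        rw [add_comm s h, hTadd h s hh.le hs0]; rfl
      simp only [hg]
      rw [(T h).map_smul, hTs, smul_smul, ← Complex.exp_add]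
      congr 2
      push_cast
      ring
    have h3 : T h (G τ) = Complex.exp (μ*h) • ∫ s in h..(τ+h), g s := by
      rw [h1, integral_congr h2, intervalIntegral.integral_smul, integral_comp_add_right g h,
        zero_add]
    have hadj1 : G h + ∫ s in h..(τ+h), g s = G (τ+h) :=
      integral_add_adjacent_intervals (hgi 0 h le_rfl hh.le)
        (hgi h (τ+h) hh.le (by linarith))
    have hadj2 : G τ + ∫ s in τ..(τ+h), g s = G (τ+h) :=
      integral_add_adjacent_intervals (hgi 0 τ le_rfl hτ.le)
        (hgi τ (τ+h) hτ.le (by linarith))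
    have hsplit : ∫ s in h..(τ+h), g s = G τ + (∫ s in τ..(τ+h), g s) - G h := by
      rw [hadj2, ← hadj1]; abel
    rw [h3, hsplit]
    have e1 : Complex.exp (μ*h) • (G τ + (∫ s in τ..(τ+h), g s) - G h) - G τ
        = (Complex.exp (μ*h) - 1) • G τ + Complex.exp (μ*h) • (∫ s in τ..(τ+h), g s)
          - Complex.exp (μ*h) • G h := by
      rw [sub_smul, one_smul, smul_sub, smul_add]; abel
    rw [e1, smul_sub, smul_add]
    congr 1
    · congr 1
      · rw [← smul_assoc]
        congr 1
        rw [Complex.real_smul, Complex.ofReal_inv]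
      · exact smul_comm _ _ _
    · exact smul_comm _ _ _
  -- limit pieces
  have lim1 : Tendsto (fun h : ℝ => (h:ℂ)⁻¹ * (Complex.exp (μ*h) - 1))
      (nhdsWithin 0 (Ioi 0)) (nhds μ) := by
    have hd0 : HasDerivAt (fun z : ℂ => Complex.exp (μ*z)) μ 0 := by
      have h1 : HasDerivAt (fun z : ℂ => μ * z) μ 0 := by
        simpa using (hasDerivAt_id (0:ℂ)).const_mul μ
      have := (Complex.hasDerivAt_exp (μ*0)).comp 0 h1
      simpa [Function.comp_def] using this
    have hd : HasDerivAt (fun t : ℝ => Complex.exp (μ*t)) μ 0 := by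
      have := hd0.comp_ofReal (z := 0)
      simpa using this
    have := hasDerivAt_iff_tendsto_slope.mp hd
    have h2 : Tendsto (slope (fun t : ℝ => Complex.exp (μ*t)) 0)
        (nhdsWithin 0 (Ioi 0)) (nhds μ) :=
      this.mono_left (nhdsWithin_mono 0 (fun x hx => ne_of_gt hx))
    refine h2.congr' ?_
    filter_upwards [self_mem_nhdsWithin] with h hh
    simp [slope_def_module, Complex.real_smul, Complex.ofReal_inv]
  have lim2 : Tendsto (fun h : ℝ => h⁻¹ • G h) (nhdsWithin 0 (Ioi 0)) (nhds y) := by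
    have hder : HasDerivWithinAt G (g 0) (Ici 0) 0 := by
      refine integral_hasDerivWithinAt_right (hgi 0 0 le_rfl le_rfl)
        ((hgc.mono Ioi_subset_Ici_self).stronglyMeasurableAtFilter_nhdsWithin measurableSet_Ioi 0)
        ((hgc 0 self_mem_Ici).mono Ioi_subset_Ici_self)
    have := hasDerivWithinAt_iff_tendsto_slope.mp hder
    rw [Ici_sdiff_left] at this
    have hg0 : g 0 = y := by simp [hg, hT0]
    rw [hg0] at this
    refine this.congr' ?_
    filter_upwards [self_mem_nhdsWithin] with h hh
    simp [slope_def_module, hG, integral_same]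
  have lim3 : Tendsto (fun h : ℝ => h⁻¹ • (∫ s in τ..(τ+h), g s))
      (nhdsWithin 0 (Ioi 0)) (nhds (g τ)) := by
    have hder : HasDerivWithinAt G (g τ) (Ici τ) τ :=
      integral_hasDerivWithinAt_right (hgi 0 τ le_rfl hτ.le)
        ((hgc.mono (fun x hx => (hτ.trans hx).le)).stronglyMeasurableAtFilter_nhdsWithin
          measurableSet_Ioi τ)
        ((hgc τ (mem_Ici.mpr hτ.le)).mono (fun x hx => (hτ.trans hx).le))
    have h1 := hasDerivWithinAt_iff_tendsto_slope.mp hder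
    rw [Ici_sdiff_left] at h1
    have hmap : Tendsto (fun h : ℝ => τ + h) (nhdsWithin 0 (Ioi 0)) (nhdsWithin τ (Ioi τ)) := by
      refine tendsto_nhdsWithin_of_tendsto_nhds_of_eventually_within _ ?_ ?_
      · exact (by simpa [Pi.add_def] using ((continuous_const.add continuous_id).tendsto (0:ℝ))
          : Tendsto (fun h : ℝ => τ + h) (nhds 0) (nhds τ)).mono_left nhdsWithin_le_nhds
      · filter_upwards [self_mem_nhdsWithin] with h hh
        simpa using hh
    have h2 := h1.comp hmap
    refine h2.congr' ?_
    filter_upwards [self_mem_nhdsWithin] with h hh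
    have hGs : G (τ + h) - G τ = ∫ s in τ..(τ+h), g s := by
      have hadj2 : G τ + ∫ s in τ..(τ+h), g s = G (τ+h) :=
        integral_add_adjacent_intervals (hgi 0 τ le_rfl hτ.le)
          (hgi τ (τ+h) hτ.le (by have := mem_Ioi.mp hh; linarith))
      rw [← hadj2]; abel
    simp only [Function.comp_apply, slope_def_module, add_sub_cancel_left]
    rw [hGs]
  have lim4 : Tendsto (fun h : ℝ => Complex.exp (μ*h)) (nhdsWithin 0 (Ioi 0))
      (nhds 1) := by
    have h0 : Tendsto (fun h : ℝ => Complex.exp (μ*h)) (nhdsWithin 0 (Ioi 0))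
        (nhds (Complex.exp (μ*(0:ℝ)))) :=
      ((Complex.continuous_exp.comp
        (continuous_const.mul Complex.continuous_ofReal)).tendsto (0:ℝ)).mono_left
        nhdsWithin_le_nhds
    simpa using h0
  have htot : Tendsto (fun h : ℝ =>
      ((h:ℂ)⁻¹ * (Complex.exp (μ*h) - 1)) • G τ
        + Complex.exp (μ*h) • (h⁻¹ • (∫ s in τ..(τ+h), g s))
        - Complex.exp (μ*h) • (h⁻¹ • G h))
      (nhdsWithin 0 (Ioi 0))
      (nhds (μ • G τ + (1:ℂ) • g τ - (1:ℂ) • y)) :=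
    ((lim1.smul_const (G τ)).add (lim4.smul lim3)).sub (lim4.smul lim2)
  have : (μ • G τ + (1:ℂ) • g τ - (1:ℂ) • y) = μ • G τ - y + Complex.exp (-(μ*τ)) • T τ y := by
    simp only [one_smul, hg]; abel
  rw [this] at htot
  refine htot.congr' ?_
  filter_upwards [self_mem_nhdsWithin] with h hh
  exact (hid h hh).symm

/-- Any continuous linear map commuting with each `T s`, `s ≥ 0`, commutes with the
semigroup integral. -/
lemma comm_integral (T : ℝ → X →L[ℂ] X)
    (hTcont : ∀ x : X, ContinuousOn (fun t : ℝ => T t x) (Ici 0))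
    (Q : X →L[ℂ] X) (hQ : ∀ s : ℝ, 0 ≤ s → ∀ v : X, Q (T s v) = T s (Q v))
    (μ : ℂ) (τ : ℝ) (hτ : 0 ≤ τ) (y : X) :
    Q (∫ s in (0:ℝ)..τ, Complex.exp (-(μ*s)) • T s y)
      = ∫ s in (0:ℝ)..τ, Complex.exp (-(μ*s)) • T s (Q y) := by
  have hgc : ContinuousOn (fun s : ℝ => Complex.exp (-(μ*s)) • T s y) (Ici 0) := by
    apply ContinuousOn.smul _ (hTcont y)
    exact (Complex.continuous_exp.comp
      ((continuous_const.mul Complex.continuous_ofReal).neg)).continuousOn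
  have hgi : IntervalIntegrable (fun s : ℝ => Complex.exp (-(μ*s)) • T s y) volume 0 τ := by
    apply (hgc.mono ?_).intervalIntegrable
    intro x hx
    exact le_trans (le_min le_rfl hτ) hx.1
  rw [← Q.intervalIntegral_comp_comm hgi]
  apply integral_congr
  intro s hs
  have hs0 : 0 ≤ s := by
    rw [uIcc_of_le hτ] at hs; exact hs.1
  show Q (Complex.exp (-(μ*s)) • T s y) = Complex.exp (-(μ*s)) • T s (Q y)
  rw [Q.map_smul, hQ s hs0 y]

lemma g_int (T : ℝ → X →L[ℂ] X)
    (hTcont : ∀ x : X, ContinuousOn (fun t : ℝ => T t x) (Ici 0))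
    (μ : ℂ) (y : X) {a b : ℝ} (ha : 0 ≤ a) (hb : 0 ≤ b) :
    IntervalIntegrable (fun s : ℝ => Complex.exp (-(μ*s)) • T s y) volume a b := by
  have hgc : ContinuousOn (fun s : ℝ => Complex.exp (-(μ*s)) • T s y) (Ici 0) := by
    apply ContinuousOn.smul _ (hTcont y)
    exact (Complex.continuous_exp.comp
      ((continuous_const.mul Complex.continuous_ofReal).neg)).continuousOn
  apply (hgc.mono ?_).intervalIntegrable
  intro x hx
  exact le_trans (le_min ha hb) hx.1

end aux

theorem stmt_16 {X : Type*} [NormedAddCommGroup X] [NormedSpace ℂ X] [CompleteSpace X]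
    (T : ℝ → X →L[ℂ] X) (hT0 : T 0 = 1)
    (hTadd : ∀ t s : ℝ, 0 ≤ t → 0 ≤ s → T (t + s) = T t * T s)
    (hTcont : ∀ x : X, ContinuousOn (fun t : ℝ => T t x) (Ici 0))
    (D : Set X) (A : X → X) (hgen : IsGenerator T D A)
    (ζ : ℂ) (hζ : ‖ζ‖ = 1) (t₀ K : ℝ) (ht₀ : 0 < t₀) (hK : 0 < K)
    (hres : ∀ t : ℝ, 0 < t → t ≤ t₀ → ∃ Q : X →L[ℂ] X,
      Q * (ζ • 1 - T t) = 1 ∧ (ζ • 1 - T t) * Q = 1 ∧ ‖Q‖ ≤ K) :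
    ∃ α₀ > (0 : ℝ), ∃ C > (0 : ℝ), ∀ α : ℝ, α₀ < |α| →
      ∃ B : X →L[ℂ] X,
        (∀ x ∈ D, B (A x - (Complex.I * α) • x) = x) ∧
        (∀ x : X, B x ∈ D ∧ A (B x) - (Complex.I * α) • B x = x) ∧
        |α| * ‖B‖ ≤ C := by
  obtain ⟨hgen1, hgen2⟩ := hgen
  obtain ⟨M', hM'⟩ : ∃ M', ∀ s : Icc (0:ℝ) t₀, ‖T s.1‖ ≤ M' := by
    apply banach_steinhaus (g := fun s : Icc (0:ℝ) t₀ => T s.1)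
    intro x
    obtain ⟨C, hC⟩ := isCompact_Icc.exists_bound_of_continuousOn
      ((hTcont x).mono Icc_subset_Ici_self)
    exact ⟨C, fun s => hC s.1 s.2⟩
  set M : ℝ := max M' 1 with hMdef
  have hM0 : 0 < M := lt_of_lt_of_le one_pos (le_max_right _ _)
  have hMs : ∀ s : ℝ, 0 ≤ s → s ≤ t₀ → ‖T s‖ ≤ M := fun s h1 h2 =>
    le_trans (hM' ⟨s, h1, h2⟩) (le_max_left _ _)
  have hπ : (0:ℝ) < Real.pi := Real.pi_pos
  refine ⟨3 * Real.pi / t₀ + 1, by positivity, 3 * Real.pi * M * K, by positivity, ?_⟩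
  intro α hα
  have hα1 : (1:ℝ) < |α| := lt_of_le_of_lt (le_add_of_nonneg_left (by positivity)) hα
  have hαpos : 0 < |α| := lt_trans one_pos hα1
  have hα0 : α ≠ 0 := fun h => by simp [h] at hαpos
  set θ : ℝ := Complex.arg ζ with hθdef
  have hθ1 : -Real.pi < θ := Complex.neg_pi_lt_arg ζ
  have hθ2 : θ ≤ Real.pi := Complex.arg_le_pi ζ
  set σ : ℝ := if 0 < α then 2*Real.pi else -(2*Real.pi) with hσdef
  set τ : ℝ := (θ + σ)/α with hτdef
  have hτpos : 0 < τ := by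
    rcases lt_or_gt_of_ne hα0 with hneg | hpos
    · rw [hτdef, hσdef, if_neg (not_lt.mpr hneg.le)]
      apply div_pos_of_neg_of_neg <;> linarith
    · rw [hτdef, hσdef, if_pos hpos]
      apply div_pos <;> linarith
  have hατ : α * τ = θ + σ := by
    rw [hτdef]
    field_simp
  have habs' : |θ + σ| ≤ 3 * Real.pi := by
    rw [abs_le]
    rcases lt_or_gt_of_ne hα0 with hneg | hpos
    · rw [hσdef, if_neg (not_lt.mpr hneg.le)]
      constructor <;> linarith
    · rw [hσdef, if_pos hpos]
      constructor <;> linarith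
  have habs : |α| * τ ≤ 3 * Real.pi := by
    calc |α| * τ = |α| * |τ| := by rw [abs_of_pos hτpos]
    _ = |α * τ| := (abs_mul α τ).symm
    _ = |θ + σ| := by rw [hατ]
    _ ≤ 3 * Real.pi := habs'
  have hτt₀ : τ ≤ t₀ := by
    have h1 : 3 * Real.pi / t₀ < |α| := lt_of_le_of_lt (by linarith) hα
    have h2 : 3 * Real.pi < |α| * t₀ := (div_lt_iff₀ ht₀).mp h1
    have h3 : |α| * τ < |α| * t₀ := lt_of_le_of_lt habs h2
    exact le_of_lt ((mul_lt_mul_iff_right₀ hαpos).mp h3)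
  obtain ⟨Q, hQ1, hQ2, hQK⟩ := hres τ hτpos hτt₀
  set μ : ℂ := Complex.I * α with hμdef
  have hζ0 : ζ ≠ 0 := by
    intro h
    rw [h] at hζ
    simp at hζ
  have hζexp : Complex.exp ((θ:ℂ) * Complex.I) = ζ := by
    have h := Complex.norm_mul_exp_arg_mul_I ζ
    rwa [hζ, Complex.ofReal_one, one_mul] at h
  have hexp : Complex.exp (-(μ * τ)) = ζ⁻¹ := by
    have h2 : ((α:ℂ)) * ((τ:ℂ)) = ((θ:ℂ)) + ((σ:ℂ)) := by
      have := congrArg (fun r : ℝ => (r : ℂ)) hατ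
      push_cast at this
      exact this
    have h1 : -(μ * (τ:ℂ)) = -((θ:ℂ) * Complex.I) + -((σ:ℂ) * Complex.I) := by
      rw [hμdef]
      linear_combination (-Complex.I) * h2
    rw [h1, Complex.exp_add]
    have h3 : Complex.exp (-((σ:ℂ) * Complex.I)) = 1 := by
      rcases lt_or_gt_of_ne hα0 with hneg | hpos
      · rw [hσdef, if_neg (not_lt.mpr hneg.le), ← Complex.exp_int_mul_two_pi_mul_I 1]
        congr 1
        push_cast
        ring
      · rw [hσdef, if_pos hpos, ← Complex.exp_int_mul_two_pi_mul_I (-1)]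
        congr 1
        push_cast
        ring
    rw [h3, mul_one, Complex.exp_neg, hζexp]
  have gint : ∀ y : X, IntervalIntegrable (fun s : ℝ => Complex.exp (-(μ*s)) • T s y)
      volume 0 τ := fun y => g_int T hTcont μ y le_rfl hτpos.le
  set Fl : X →ₗ[ℂ] X :=
    { toFun := fun y => ∫ s in (0:ℝ)..τ, Complex.exp (-(μ*s)) • T s y
      map_add' := by
        intro y z
        simp only [map_add, smul_add]
        exact intervalIntegral.integral_add (gint y) (gint z)
      map_smul' := by
        intro c y
        simp only [RingHom.id_apply]
        rw [← intervalIntegral.integral_smul]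
        apply integral_congr
        intro s hs
        show Complex.exp (-(μ*s)) • T s (c • y) = c • Complex.exp (-(μ*s)) • T s y
        rw [(T s).map_smul]
        exact smul_comm _ _ _ } with hFldef
  have hFlb : ∀ y : X, ‖Fl y‖ ≤ (τ * M) * ‖y‖ := by
    intro y
    have h1 : ∀ s ∈ uIoc (0:ℝ) τ, ‖Complex.exp (-(μ*s)) • T s y‖ ≤ M * ‖y‖ := by
      intro s hs
      rw [uIoc_of_le hτpos.le] at hs
      rw [norm_smul]
      have habs1 : ‖Complex.exp (-(μ*s))‖ = 1 := by
        rw [Complex.norm_exp, hμdef]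
        norm_num [Complex.mul_re]
      rw [habs1, one_mul]
      calc ‖T s y‖ ≤ ‖T s‖ * ‖y‖ := (T s).le_opNorm y
      _ ≤ M * ‖y‖ :=
        mul_le_mul_of_nonneg_right (hMs s hs.1.le (le_trans hs.2 hτt₀)) (norm_nonneg y)
    calc ‖Fl y‖ ≤ (M * ‖y‖) * |τ - 0| := intervalIntegral.norm_integral_le_of_norm_le_const h1
    _ = (τ * M) * ‖y‖ := by rw [sub_zero, abs_of_pos hτpos]; ring
  set F : X →L[ℂ] X := Fl.mkContinuous (τ * M) hFlb with hFdef
  have hFnorm : ‖F‖ ≤ τ * M := Fl.mkContinuous_norm_le (by positivity) hFlb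
  have hFapp : ∀ y : X, F y = ∫ s in (0:ℝ)..τ, Complex.exp (-(μ*s)) • T s y := fun y => rfl
  have hDfact : ∀ y : X, F y ∈ D ∧ A (F y) = μ • F y - y + ζ⁻¹ • T τ y := by
    intro y
    have hk := key_tendsto T hT0 hTadd hTcont μ τ hτpos y
    rw [hexp, ← hFapp y] at hk
    have hmem : F y ∈ D := (hgen1 (F y)).mpr ⟨_, hk⟩
    exact ⟨hmem, tendsto_nhds_unique (hgen2 _ hmem) hk⟩
  have hsmulD : ∀ (c : ℂ) (u : X), u ∈ D → c • u ∈ D ∧ A (c • u) = c • A u := by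
    intro c u hu
    have h1 : Tendsto (fun t : ℝ => t⁻¹ • (T t (c • u) - c • u)) (nhdsWithin 0 (Ioi 0))
        (nhds (c • A u)) := by
      have h2 := (hgen2 u hu).const_smul c
      refine h2.congr (fun t => ?_)
      rw [(T t).map_smul, ← smul_sub]
      exact smul_comm _ _ _
    have hmem : c • u ∈ D := (hgen1 _).mpr ⟨_, h1⟩
    exact ⟨hmem, tendsto_nhds_unique (hgen2 _ hmem) h1⟩
  have hTsc : ∀ s t : ℝ, 0 ≤ s → 0 ≤ t → ∀ v, T t (T s v) = T s (T t v) := by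
    intro s t hs ht v
    have h : T t * T s = T s * T t := by
      rw [← hTadd t s ht hs, ← hTadd s t hs ht, add_comm]
    calc T t (T s v) = (T t * T s) v := rfl
    _ = (T s * T t) v := by rw [h]
    _ = T s (T t v) := rfl
  have hFT : ∀ t : ℝ, 0 ≤ t → ∀ y, T t (F y) = F (T t y) := by
    intro t ht y
    rw [hFapp, hFapp]
    exact comm_integral T hTcont (T t) (fun s hs v => hTsc s t hs ht v) μ τ hτpos.le y
  have hFA : ∀ x ∈ D, F (A x) = A (F x) := by
    intro x hx
    have h1 := (F.continuous.tendsto (A x)).comp (hgen2 x hx)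
    have h2 : Tendsto (fun t : ℝ => t⁻¹ • (T t (F x) - F x)) (nhdsWithin 0 (Ioi 0))
        (nhds (F (A x))) := by
      refine h1.congr' ?_
      filter_upwards [self_mem_nhdsWithin] with t ht
      show F (t⁻¹ • (T t x - x)) = t⁻¹ • (T t (F x) - F x)
      rw [F.map_smul_of_tower, F.map_sub, hFT t (le_of_lt ht)]
    exact tendsto_nhds_unique h2 (hgen2 _ (hDfact x).1)
  have hQTop : ∀ s : ℝ, 0 ≤ s → Q * T s = T s * Q := by
    intro s hs
    have h1 : T s * T τ = T τ * T s := by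
      rw [← hTadd s τ hs hτpos.le, ← hTadd τ s hτpos.le hs, add_comm]
    have hc : T s * (ζ • 1 - T τ) = (ζ • 1 - T τ) * T s := by
      simp only [mul_sub, sub_mul, mul_smul_comm, smul_mul_assoc, mul_one, one_mul, h1]
    have key : T s * ((ζ • 1 - T τ) * Q) = (ζ • 1 - T τ) * (T s * Q) := by
      rw [← mul_assoc, hc, mul_assoc]
    calc Q * T s = Q * (T s * ((ζ • 1 - T τ) * Q)) := by rw [hQ2, mul_one]
    _ = Q * ((ζ • 1 - T τ) * (T s * Q)) := by rw [key]
    _ = Q * (ζ • 1 - T τ) * (T s * Q) := by rw [mul_assoc]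
    _ = T s * Q := by rw [hQ1, one_mul]
  have hQT : ∀ s : ℝ, 0 ≤ s → ∀ v, Q (T s v) = T s (Q v) := by
    intro s hs v
    have := congrArg (fun L : X →L[ℂ] X => L v) (hQTop s hs)
    simpa [ContinuousLinearMap.mul_apply] using this
  have hQF : ∀ y, Q (F y) = F (Q y) := by
    intro y
    rw [hFapp, hFapp]
    exact comm_integral T hTcont Q hQT μ τ hτpos.le y
  have hQapp : ∀ v : X, ζ • Q v - T τ (Q v) = v := by
    intro v
    have := congrArg (fun L : X →L[ℂ] X => L v) hQ2
    simpa [ContinuousLinearMap.mul_apply, ContinuousLinearMap.sub_apply,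
      ContinuousLinearMap.smul_apply, ContinuousLinearMap.one_apply] using this
  refine ⟨(-ζ) • (Q.comp F), ?_, ?_, ?_⟩
  · intro x hx
    have h1 : F (A x - μ • x) = ζ⁻¹ • T τ x - x := by
      rw [F.map_sub, F.map_smul, hFA x hx, (hDfact x).2]
      abel
    rw [ContinuousLinearMap.smul_apply, ContinuousLinearMap.comp_apply, h1,
      Q.map_sub, Q.map_smul, hQT τ hτpos.le x]
    have h2 := hQapp x
    have h3 : (-ζ) • (ζ⁻¹ • T τ (Q x) - Q x) = ζ • Q x - T τ (Q x) := by
      rw [smul_sub, smul_smul, neg_mul, mul_inv_cancel₀ hζ0, neg_smul, neg_smul, one_smul,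
        sub_neg_eq_add]
      abel
    rw [h3, h2]
  · intro x
    have hBx : ((-ζ) • (Q.comp F)) x = (-ζ) • F (Q x) := by
      rw [ContinuousLinearMap.smul_apply, ContinuousLinearMap.comp_apply, hQF x]
    obtain ⟨hmem0, hAval0⟩ := hDfact (Q x)
    obtain ⟨hmem, hAval⟩ := hsmulD (-ζ) (F (Q x)) hmem0
    refine ⟨by rw [hBx]; exact hmem, ?_⟩
    rw [hBx, hAval, hAval0]
    have e1 : (-ζ) • (μ • F (Q x) - Q x + ζ⁻¹ • T τ (Q x)) - μ • ((-ζ) • F (Q x))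
        = ζ • Q x - T τ (Q x) := by
      have h4 : (-ζ) • (ζ⁻¹ • T τ (Q x)) = -(T τ (Q x)) := by
        rw [smul_smul, neg_mul, mul_inv_cancel₀ hζ0, neg_smul, one_smul]
      have h5 : μ • ((-ζ) • F (Q x)) = (-ζ) • (μ • F (Q x)) := smul_comm _ _ _
      rw [smul_add, smul_sub, h4, h5, neg_smul ζ (Q x)]
      abel
    rw [e1, hQapp x]
  · have h1 : ‖(-ζ) • (Q.comp F)‖ ≤ ‖Q.comp F‖ := by
      have h2 := (Q.comp F).opNorm_smul_le (-ζ)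
      rwa [norm_neg, hζ, one_mul] at h2
    calc |α| * ‖(-ζ) • (Q.comp F)‖ ≤ |α| * ‖Q.comp F‖ :=
        mul_le_mul_of_nonneg_left h1 (abs_nonneg α)
    _ ≤ |α| * (K * (τ * M)) := by
        apply mul_le_mul_of_nonneg_left _ (abs_nonneg α)
        calc ‖Q.comp F‖ ≤ ‖Q‖ * ‖F‖ := Q.opNorm_comp_le F
        _ ≤ K * (τ * M) := mul_le_mul hQK hFnorm (norm_nonneg F) hK.le
    _ = (|α| * τ) * (K * M) := by ring
    _ ≤ (3 * Real.pi) * (K * M) :=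
        mul_le_mul_of_nonneg_right habs (by positivity)
    _ = 3 * Real.pi * M * K := by ring
end

section
/- Let $X$ be a Banach space, $(U(t))_{t \in \mathbb{R}}$ a group of bounded operators with $\|U(t)\| \le M e^{\omega |t|}$ for constants $M \ge 1$, $\omega \ge 0$, and set $C(t) = \frac{1}{2}(U(t)+U(-t))$. Suppose $\limsup_{t \downarrow 0}\|C(t) - \mathrm{Id}\| = \rho < 2$. Then for every $\tilde{\rho} \in (\rho, 2)$ there exist $N \in \mathbb{N}$ and $t_1 > 0$ such that $\left\|\left(\tfrac{1}{2}(U(t) - \mathrm{Id})^2\right)^N\right\| \le \tilde{\rho}^N < 2^N$ for all $0 < t < t_1$. -/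
set_option maxHeartbeats 1000000
set_option synthInstance.maxHeartbeats 400000

lemma stmt_18_pow_aux {X : Type*} [NormedAddCommGroup X] [NormedSpace ℝ X]
    (U : ℝ → X →L[ℝ] X) (hU0 : U 0 = 1) (hUadd : ∀ t s : ℝ, U (t + s) = U t * U s)
    (t : ℝ) : ∀ n : ℕ, U ((n : ℝ) * t) = (U t) ^ n := by
  intro n
  induction n with
  | zero => simp [hU0]
  | succ n ih =>
    rw [Nat.cast_add, Nat.cast_one, add_mul, one_mul, hUadd, ih, pow_succ]

theorem stmt_18 {X : Type*} [NormedAddCommGroup X] [NormedSpace ℝ X]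
    (U : ℝ → X →L[ℝ] X) (hU0 : U 0 = 1) (hUadd : ∀ t s : ℝ, U (t + s) = U t * U s)
    (M ω : ℝ) (hM : 1 ≤ M) (hω : 0 ≤ ω) (hUbound : ∀ t : ℝ, ‖U t‖ ≤ M * Real.exp (ω * |t|))
    (ρ : ℝ)
    (hρ : Filter.limsup (fun t : ℝ => ‖(1 / 2 : ℝ) • (U t + U (-t)) - 1‖)
        (nhdsWithin 0 (Set.Ioi 0)) = ρ)
    (hρ2 : ρ < 2) :
    ∀ ρ' : ℝ, ρ < ρ' → ρ' < 2 →
      ∃ N : ℕ, ∃ t₁ > (0 : ℝ), ∀ t : ℝ, 0 < t → t < t₁ →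
        ‖((1 / 2 : ℝ) • (U t - 1) ^ 2) ^ N‖ ≤ ρ' ^ N ∧ ρ' ^ N < 2 ^ N := by
  intro ρ' hρρ' hρ'2
  set f : ℝ → ℝ := fun t : ℝ => ‖(1 / 2 : ℝ) • (U t + U (-t)) - 1‖ with hf
  -- boundedness of f near 0
  have hM0 : 0 < M := lt_of_lt_of_le one_pos hM
  have hbdd : Filter.IsBoundedUnder (· ≤ ·) (nhdsWithin (0:ℝ) (Set.Ioi 0)) f := by
    refine ⟨M * Real.exp ω + 1, ?_⟩
    rw [Filter.eventually_map]
    have h1 : ∀ᶠ t in nhds (0:ℝ), |t| ≤ 1 := by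
      have := eventually_abs_sub_lt (0:ℝ) one_pos
      filter_upwards [this] with t ht
      simp only [sub_zero] at ht
      exact ht.le
    refine (h1.filter_mono nhdsWithin_le_nhds).mono ?_
    intro t ht
    have hUt : ‖U t‖ ≤ M * Real.exp ω := by
      refine (hUbound t).trans ?_
      gcongr
      calc ω * |t| ≤ ω * 1 := by gcongr
        _ = ω := mul_one ω
    have hUmt : ‖U (-t)‖ ≤ M * Real.exp ω := by
      refine (hUbound (-t)).trans ?_
      gcongr
      calc ω * |(-t)| ≤ ω * 1 := by gcongr; simpa using ht
        _ = ω := mul_one ω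
    have : f t ≤ (1/2 : ℝ) * (‖U t‖ + ‖U (-t)‖) + 1 := by
      refine (norm_sub_le _ _).trans ?_
      have h2 : ‖(1/2 : ℝ) • (U t + U (-t))‖ ≤ (1/2 : ℝ) * (‖U t‖ + ‖U (-t)‖) := by
        calc ‖(1/2 : ℝ) • (U t + U (-t))‖ = ‖(1/2:ℝ)‖ * ‖U t + U (-t)‖ :=
              norm_smul (1/2 : ℝ) (U t + U (-t))
          _ = (1/2:ℝ) * ‖U t + U (-t)‖ := by norm_num
          _ ≤ (1/2:ℝ) * (‖U t‖ + ‖U (-t)‖) := by gcongr; exact norm_add_le _ _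
      have h3 : ‖(1 : X →L[ℝ] X)‖ ≤ 1 := ContinuousLinearMap.norm_id_le
      linarith
    calc f t ≤ (1/2 : ℝ) * (‖U t‖ + ‖U (-t)‖) + 1 := this
      _ ≤ (1/2 : ℝ) * (M * Real.exp ω + M * Real.exp ω) + 1 := by gcongr
      _ = M * Real.exp ω + 1 := by ring
  set ρ'' : ℝ := (ρ + ρ') / 2 with hρ''
  have hρρ'' : ρ < ρ'' := by simp only [hρ'']; linarith
  have hρ''ρ' : ρ'' < ρ' := by simp only [hρ'']; linarith
  have hlt : Filter.limsup f (nhdsWithin (0:ℝ) (Set.Ioi 0)) < ρ'' := by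
    rw [hρ]; exact hρρ''
  have hev : ∀ᶠ t in nhdsWithin (0:ℝ) (Set.Ioi 0), f t < ρ'' :=
    Filter.eventually_lt_of_limsup_lt hlt hbdd
  -- ρ'' > 0
  have hρ''pos : 0 < ρ'' := by
    obtain ⟨t0, ht0⟩ := hev.exists
    exact lt_of_le_of_lt (norm_nonneg _) ht0
  have hρ'pos : 0 < ρ' := lt_trans hρ''pos hρ''ρ'
  set σ : ℝ := (ρ'' + ρ') / 2 with hσ
  have hσ1 : ρ'' < σ := by simp only [hσ]; linarith
  have hσ2 : σ < ρ' := by simp only [hσ]; linarith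
  have hσpos : 0 < σ := lt_trans hρ''pos hσ1
  have hq1 : 1 < σ / ρ'' := (one_lt_div hρ''pos).2 hσ1
  have hq2 : 1 < ρ' / σ := (one_lt_div hσpos).2 hσ2
  -- extract interval from hev
  obtain ⟨u, hu, hsub⟩ := mem_nhdsGT_iff_exists_Ioo_subset.1 hev
  -- choose t₁
  have hlogpos : 0 < Real.log (σ / ρ'') := Real.log_pos hq1
  set t₁ : ℝ := min u (Real.log (σ / ρ'') / (ω + 1)) with ht₁
  have ht₁pos : 0 < t₁ := lt_min hu (div_pos hlogpos (by linarith))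
  -- choose N
  obtain ⟨N0, hN0⟩ := pow_unbounded_of_one_lt M hq2
  set N : ℕ := max N0 1 with hN
  have hNM : M < (ρ' / σ) ^ N :=
    lt_of_lt_of_le hN0 (pow_le_pow_right₀ (le_of_lt hq2) (le_max_left _ _))
  have hN1 : 1 ≤ N := le_max_right _ _
  refine ⟨N, t₁, ht₁pos, fun t ht htt₁ => ?_⟩
  -- operator algebra
  set A : X →L[ℝ] X := U t with hA
  set B : X →L[ℝ] X := U (-t) with hB
  have hAB : A * B = 1 := by
    rw [hA, hB, ← hUadd]; simp [hU0]
  have hBA : B * A = 1 := by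
    rw [hA, hB, ← hUadd]; simp [hU0]
  set D : X →L[ℝ] X := (1/2 : ℝ) • (A + B) - 1 with hD
  have hAD : A * D = (1/2 : ℝ) • (A * A + A * B) - A := by
    rw [hD, mul_sub, mul_smul_comm, mul_add, mul_one]
  have hDA : D * A = (1/2 : ℝ) • (A * A + B * A) - A := by
    rw [hD, sub_mul, smul_mul_assoc, add_mul, one_mul]
  have hkey : (1/2 : ℝ) • (A - 1) ^ 2 = A * D := by
    have h1 : (A - 1) ^ 2 = A * A - (A + A) + 1 := by noncomm_ring
    rw [h1, hAD, hAB]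
    module
  have hcomm : Commute A D := by
    show A * D = D * A
    rw [hAD, hDA, hAB, hBA]
  have hpowid : ((1/2 : ℝ) • (A - 1) ^ 2) ^ N = U ((N : ℝ) * t) * D ^ N := by
    rw [hkey, hcomm.mul_pow, stmt_18_pow_aux U hU0 hUadd t N, hA]
  -- norm estimates
  have htu : t < u := lt_of_lt_of_le htt₁ (min_le_left _ _)
  have hDnorm : ‖D‖ < ρ'' := hsub ⟨ht, htu⟩
  have hexp : Real.exp (ω * t) ≤ σ / ρ'' := by
    have h1 : ω * t ≤ Real.log (σ / ρ'') := by
      have h2 : t ≤ Real.log (σ / ρ'') / (ω + 1) :=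
        le_of_lt (lt_of_lt_of_le htt₁ (min_le_right _ _))
      have h3 : ω * t ≤ (ω + 1) * t := by nlinarith
      have h4 : (ω + 1) * t ≤ Real.log (σ / ρ'') := by
        rw [mul_comm]
        exact (le_div_iff₀ (by linarith)).1 h2
      linarith
    calc Real.exp (ω * t) ≤ Real.exp (Real.log (σ / ρ'')) := Real.exp_le_exp.2 h1
      _ = σ / ρ'' := Real.exp_log (div_pos hσpos hρ''pos)
  have hUNt : ‖U ((N : ℝ) * t)‖ ≤ M * (σ / ρ'') ^ N := by
    refine (hUbound _).trans ?_
    have habs : |(N : ℝ) * t| = (N : ℝ) * t := by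
      rw [abs_of_nonneg]; positivity
    rw [habs]
    have : ω * ((N : ℝ) * t) = (N : ℝ) * (ω * t) := by ring
    rw [this, Real.exp_nat_mul]
    have hexp0 : (0:ℝ) ≤ Real.exp (ω * t) := (Real.exp_pos _).le
    gcongr
  have hbound : ‖((1/2 : ℝ) • (A - 1) ^ 2) ^ N‖ ≤ ρ' ^ N := by
    rw [hpowid]
    calc ‖U ((N : ℝ) * t) * D ^ N‖ ≤ ‖U ((N : ℝ) * t)‖ * ‖D ^ N‖ := norm_mul_le _ _
      _ ≤ (M * (σ / ρ'') ^ N) * ‖D‖ ^ N := by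
          have h5 : ‖D ^ N‖ ≤ ‖D‖ ^ N := norm_pow_le' D (by omega)
          have h6 : (0:ℝ) ≤ M * (σ / ρ'') ^ N := by positivity
          exact mul_le_mul hUNt h5 (norm_nonneg _) h6
      _ ≤ (M * (σ / ρ'') ^ N) * ρ'' ^ N := by
          have h7 : ‖D‖ ^ N ≤ ρ'' ^ N := pow_le_pow_left₀ (norm_nonneg _) hDnorm.le N
          have h6 : (0:ℝ) ≤ M * (σ / ρ'') ^ N := by positivity
          exact mul_le_mul_of_nonneg_left h7 h6
      _ = M * σ ^ N := by
          rw [div_pow, mul_assoc, div_mul_cancel₀]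
          positivity
      _ ≤ ((ρ' / σ) ^ N) * σ ^ N :=
          mul_le_mul_of_nonneg_right hNM.le (by positivity)
      _ = ρ' ^ N := by
          rw [div_pow, div_mul_cancel₀]
          positivity
  refine ⟨hbound, ?_⟩
  exact pow_lt_pow_left₀ hρ'2 hρ'pos.le (by omega)
end
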